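/- arXiv:1508.05140 — 6 statements merged into one kernel-verified Lean document; each statement's English description precedes it below -/
import Mathlib

section
/- Suppose α < 1. Then D(z,w) < ∞ for all z, w ∈ ℝ^d, and D is a metric on ℝ^d: it is symmetric, satisfies the triangle inequality, and D(z,w) = 0 if and only if z = w. Moreover, writing B_r^D(0) := {z ∈ ℝ^d : D(0,z) ≤ r}, one has B_r^D(0) = r^{1/(1−α)} · B_1^D(0) for every r > 0. -/
open MeasureTheory Metric
open scoped ENNReal NNReal Pointwise

/-- The `D`-length of the linear segment from `a` to `b`, parametrized by `μ`-length:
`μ(b-a) · ∫_0^1 f(a + t(b-a))⁻¹ dt`. -/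
noncomputable def segLen {d : ℕ} (μ f : EuclideanSpace ℝ (Fin d) → ℝ)
    (a b : EuclideanSpace ℝ (Fin d)) : ℝ≥0∞ :=
  ENNReal.ofReal (μ (b - a)) *
    ∫⁻ t in Set.Ioo (0 : ℝ) 1, ENNReal.ofReal ((f (a + t • (b - a)))⁻¹)

/-- `D(z,w)`: the infimum of `D`-lengths of piecewise linear paths from `z` to `w`,
encoded via their finite sequences of vertices. -/
noncomputable def Dmet {d : ℕ} (μ f : EuclideanSpace ℝ (Fin d) → ℝ)
    (z w : EuclideanSpace ℝ (Fin d)) : ℝ≥0∞ :=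
  ⨅ (n : ℕ) (p : Fin (n + 1) → EuclideanSpace ℝ (Fin d)) (_ : p 0 = z)
    (_ : p (Fin.last n) = w),
    ∑ i : Fin n, segLen μ f (p i.castSucc) (p i.succ)

lemma abs_min_sub_min_le {x y c : ℝ} : |min x c - min y c| ≤ |x - y| := by
  rcases le_total x c with h1 | h1 <;> rcases le_total y c with h2 | h2
  · rw [min_eq_left h1, min_eq_left h2]
  · rw [min_eq_left h1, min_eq_right h2, abs_sub_le_iff]
    constructor <;> · first
      | linarith [le_abs_self (x - y)]
      | linarith [neg_abs_le (x - y)]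
  · rw [min_eq_right h1, min_eq_left h2, abs_sub_le_iff]
    constructor <;> · first
      | linarith [le_abs_self (x - y)]
      | linarith [neg_abs_le (x - y)]
  · rw [min_eq_right h1, min_eq_right h2]
    simp [abs_nonneg]

lemma fin_sum_telescope {M : Type*} [AddCommGroup M] :
    ∀ (n : ℕ) (F : Fin (n + 1) → M),
      ∑ i : Fin n, (F i.succ - F i.castSucc) = F (Fin.last n) - F 0 := by
  intro n
  induction n with
  | zero => intro F; simp [Fin.last]
  | succ n ih =>
    intro F
    rw [Fin.sum_univ_castSucc]
    have h := ih (fun j => F j.castSucc)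
    simp only [Fin.castSucc_zero] at h
    calc (∑ i : Fin n, (F (i.castSucc.succ) - F (i.castSucc.castSucc)))
          + (F (Fin.last n).succ - F (Fin.last n).castSucc)
        = (∑ i : Fin n, (F (i.succ.castSucc) - F (i.castSucc.castSucc)))
          + (F (Fin.last n).succ - F (Fin.last n).castSucc) := by
          rw [Finset.sum_congr rfl fun i _ => by rw [Fin.succ_castSucc]]
      _ = (F (Fin.last n).castSucc - F 0) + (F (Fin.last n).succ - F (Fin.last n).castSucc) := by
          rw [h]
      _ = F (Fin.last (n + 1)) - F 0 := by rw [Fin.succ_last]; abel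

section Aux

variable {d : ℕ} {μ f : EuclideanSpace ℝ (Fin d) → ℝ} {α : ℝ}

local notation "E" => EuclideanSpace ℝ (Fin d)

lemma Dmet_le_path {z w : E} (n : ℕ) (p : Fin (n + 1) → E) (h0 : p 0 = z)
    (h1 : p (Fin.last n) = w) :
    Dmet μ f z w ≤ ∑ i : Fin n, segLen μ f (p i.castSucc) (p i.succ) :=
  iInf_le_of_le n (iInf_le_of_le p (iInf_le_of_le h0 (iInf_le_of_le h1 le_rfl)))

lemma exists_path_of_lt {z w : E} {c : ℝ≥0∞} (h : Dmet μ f z w < c) :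
    ∃ (n : ℕ) (p : Fin (n + 1) → E), p 0 = z ∧ p (Fin.last n) = w ∧
      ∑ i : Fin n, segLen μ f (p i.castSucc) (p i.succ) < c := by
  simp only [Dmet, iInf_lt_iff] at h
  obtain ⟨n, p, h0, h1, hs⟩ := h
  exact ⟨n, p, h0, h1, hs⟩

lemma Dmet_self (z : E) : Dmet μ f z z = 0 := by
  refine le_antisymm ?_ (zero_le)
  simpa using Dmet_le_path (μ := μ) (f := f) 0 (fun _ => z) rfl rfl

lemma segLen_symm (hμ_smul : ∀ (c : ℝ) z, μ (c • z) = |c| * μ z) (a b : E) :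
    segLen μ f a b = segLen μ f b a := by
  unfold segLen
  have h1 : μ (a - b) = μ (b - a) := by
    have e : a - b = (-1 : ℝ) • (b - a) := by simp
    rw [e, hμ_smul]; simp
  rw [h1]
  congr 1
  have hmp : MeasurePreserving (fun t : ℝ => 1 - t) volume volume :=
    Measure.measurePreserving_sub_left volume 1
  have hemb : MeasurableEmbedding (fun t : ℝ => 1 - t) :=
    (MeasurableEquiv.subLeft (1 : ℝ)).measurableEmbedding
  have him : (fun t : ℝ => 1 - t) '' Set.Ioo 0 1 = Set.Ioo 0 1 := by
    rw [Set.image_const_sub_Ioo]; norm_num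
  have hsub := hmp.setLIntegral_comp_emb hemb
    (fun t => ENNReal.ofReal ((f (a + t • (b - a)))⁻¹)) (Set.Ioo 0 1)
  rw [him] at hsub
  rw [← hsub]
  refine setLIntegral_congr_fun measurableSet_Ioo (fun t _ => ?_)
  have e : a + (1 - t) • (b - a) = b + t • (a - b) := by
    rw [sub_smul, one_smul, smul_sub, smul_sub]; abel
  rw [e]

lemma f_smul (f₀ : E → ℝ) (hf0 : f 0 = 0)
    (hf : ∀ z : E, z ≠ 0 → f z = ‖z‖ ^ α * f₀ (‖z‖⁻¹ • z)) {c : ℝ} (hc : 0 < c) (u : E) :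
    f (c • u) = c ^ α * f u := by
  rcases eq_or_ne u 0 with rfl | hu
  · simp [hf0]
  · have hcu : c • u ≠ 0 := smul_ne_zero (ne_of_gt hc) hu
    rw [hf _ hcu, hf _ hu]
    have hn : ‖c • u‖ = c * ‖u‖ := by
      rw [norm_smul, Real.norm_eq_abs, abs_of_pos hc]
    have hu' : ‖u‖ ≠ 0 := norm_ne_zero_iff.mpr hu
    have hdir : ‖c • u‖⁻¹ • (c • u) = ‖u‖⁻¹ • u := by
      rw [hn, smul_smul]
      congr 1
      field_simp
    rw [hdir, hn, Real.mul_rpow hc.le (norm_nonneg u), mul_assoc]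

lemma segLen_smul (hμ_smul : ∀ (c : ℝ) z, μ (c • z) = |c| * μ z)
    {c : ℝ} (hc : 0 < c) (hfc : ∀ u : E, f (c • u) = c ^ α * f u) (a b : E) :
    segLen μ f (c • a) (c • b) = ENNReal.ofReal (c ^ (1 - α)) * segLen μ f a b := by
  unfold segLen
  have hv : c • b - c • a = c • (b - a) := (smul_sub c b a).symm
  rw [hv, hμ_smul, abs_of_pos hc]
  have hpt : ∀ t : ℝ, (f (c • a + t • c • (b - a)))⁻¹
      = (c ^ α)⁻¹ * (f (a + t • (b - a)))⁻¹ := by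
    intro t
    have hvec : c • a + t • c • (b - a) = c • (a + t • (b - a)) := by
      rw [smul_add, smul_comm t c]
    rw [hvec, hfc, mul_inv]
  have hint : (∫⁻ t in Set.Ioo (0:ℝ) 1, ENNReal.ofReal ((f (c • a + t • c • (b - a)))⁻¹))
      = ENNReal.ofReal ((c ^ α)⁻¹) *
        ∫⁻ t in Set.Ioo (0:ℝ) 1, ENNReal.ofReal ((f (a + t • (b - a)))⁻¹) := by
    rw [← lintegral_const_mul' _ _ ENNReal.ofReal_ne_top]
    refine lintegral_congr fun t => ?_
    rw [hpt t, ENNReal.ofReal_mul (by positivity)]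
  rw [hint]
  have hcc : c * (c ^ α)⁻¹ = c ^ (1 - α) := by
    rw [← Real.rpow_neg hc.le, sub_eq_add_neg, Real.rpow_add hc, Real.rpow_one]
  rw [ENNReal.ofReal_mul hc.le,
    show ENNReal.ofReal c * ENNReal.ofReal (μ (b - a)) *
        (ENNReal.ofReal ((c ^ α)⁻¹) *
          ∫⁻ t in Set.Ioo (0:ℝ) 1, ENNReal.ofReal ((f (a + t • (b - a)))⁻¹))
      = ENNReal.ofReal c * ENNReal.ofReal ((c ^ α)⁻¹) *
        (ENNReal.ofReal (μ (b - a)) *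
          ∫⁻ t in Set.Ioo (0:ℝ) 1, ENNReal.ofReal ((f (a + t • (b - a)))⁻¹)) from by ring,
    ← ENNReal.ofReal_mul hc.le, hcc]

lemma Dmet_smul_le {c : ℝ} {k : ℝ≥0∞}
    (hseg : ∀ a b : E, segLen μ f (c • a) (c • b) = k * segLen μ f a b)
    (hk0 : k ≠ 0) (hkt : k ≠ ⊤) (z w : E) :
    Dmet μ f (c • z) (c • w) ≤ k * Dmet μ f z w := by
  rw [mul_comm, ← ENNReal.div_le_iff_le_mul (Or.inl hk0) (Or.inl hkt)]
  refine le_iInf fun n => le_iInf fun p => le_iInf fun h0 => le_iInf fun h1 => ?_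
  rw [ENNReal.div_le_iff_le_mul (Or.inl hk0) (Or.inl hkt), mul_comm]
  calc Dmet μ f (c • z) (c • w)
      ≤ ∑ i : Fin n, segLen μ f (c • p i.castSucc) (c • p i.succ) :=
        Dmet_le_path n (fun i => c • p i) (by show c • p 0 = c • z; rw [h0])
          (by show c • p (Fin.last n) = c • w; rw [h1])
    _ = ∑ i : Fin n, k * segLen μ f (p i.castSucc) (p i.succ) :=
        Finset.sum_congr rfl fun i _ => hseg _ _
    _ = k * ∑ i : Fin n, segLen μ f (p i.castSucc) (p i.succ) := (Finset.mul_sum _ _ _).symm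

lemma Dmet_smul (f₀ : E → ℝ) (hf0 : f 0 = 0)
    (hf : ∀ z : E, z ≠ 0 → f z = ‖z‖ ^ α * f₀ (‖z‖⁻¹ • z))
    (hμ_smul : ∀ (c : ℝ) z, μ (c • z) = |c| * μ z)
    {c : ℝ} (hc : 0 < c) (z w : E) :
    Dmet μ f (c • z) (c • w) = ENNReal.ofReal (c ^ (1 - α)) * Dmet μ f z w := by
  set k : ℝ≥0∞ := ENNReal.ofReal (c ^ (1 - α)) with hk
  set k' : ℝ≥0∞ := ENNReal.ofReal ((c⁻¹) ^ (1 - α)) with hk'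
  have hkpos : (0:ℝ) < c ^ (1 - α) := Real.rpow_pos_of_pos hc _
  have hk'pos : (0:ℝ) < (c⁻¹) ^ (1 - α) := Real.rpow_pos_of_pos (by positivity) _
  have hk0 : k ≠ 0 := by simp [hk, ne_of_gt (ENNReal.ofReal_pos.2 hkpos)]
  have hkt : k ≠ ⊤ := ENNReal.ofReal_ne_top
  have hk'0 : k' ≠ 0 := by simp [hk', ne_of_gt (ENNReal.ofReal_pos.2 hk'pos)]
  have hk't : k' ≠ ⊤ := ENNReal.ofReal_ne_top
  have hkk' : k * k' = 1 := by
    rw [hk, hk', ← ENNReal.ofReal_mul hkpos.le, Real.inv_rpow hc.le,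
      mul_inv_cancel₀ (ne_of_gt hkpos), ENNReal.ofReal_one]
  have h1 : Dmet μ f (c • z) (c • w) ≤ k * Dmet μ f z w :=
    Dmet_smul_le (fun a b => segLen_smul hμ_smul hc (f_smul f₀ hf0 hf hc) a b) hk0 hkt z w
  have h2 : Dmet μ f z w ≤ k' * Dmet μ f (c • z) (c • w) := by
    have h := Dmet_smul_le (μ := μ) (f := f) (c := c⁻¹) (k := k')
      (fun a b => segLen_smul hμ_smul (by positivity) (f_smul f₀ hf0 hf (by positivity)) a b)
      hk'0 hk't (c • z) (c • w)
    rwa [inv_smul_smul₀ (ne_of_gt hc), inv_smul_smul₀ (ne_of_gt hc)] at h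
  refine le_antisymm h1 ?_
  calc k * Dmet μ f z w ≤ k * (k' * Dmet μ f (c • z) (c • w)) := mul_le_mul_right h2 k
    _ = (k * k') * Dmet μ f (c • z) (c • w) := (mul_assoc _ _ _).symm
    _ = Dmet μ f (c • z) (c • w) := by rw [hkk', one_mul]

lemma Dmet_symm (hμ_smul : ∀ (c : ℝ) z, μ (c • z) = |c| * μ z) (z w : E) :
    Dmet μ f z w = Dmet μ f w z := by
  have key : ∀ z w : E, Dmet μ f w z ≤ Dmet μ f z w := by
    intro z w
    refine le_iInf fun n => le_iInf fun p => le_iInf fun h0 => le_iInf fun h1 => ?_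
    have hle := Dmet_le_path (μ := μ) (f := f) n (fun i => p i.rev)
      (by show p (Fin.rev 0) = w; rw [Fin.rev_zero, h1])
      (by show p (Fin.last n).rev = z; rw [Fin.rev_last, h0])
    refine le_trans hle (le_of_eq ?_)
    refine Fintype.sum_equiv (Fin.revPerm) _ _ fun i => ?_
    show segLen μ f (p i.castSucc.rev) (p i.succ.rev)
      = segLen μ f (p (Fin.revPerm i).castSucc) (p (Fin.revPerm i).succ)
    rw [Fin.rev_castSucc, Fin.rev_succ]
    exact segLen_symm hμ_smul _ _
  exact le_antisymm (key w z) (key z w)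

lemma Dmet_triangle (z w u : E) :
    Dmet μ f z u ≤ Dmet μ f z w + Dmet μ f w u := by
  by_cases htop : Dmet μ f z w + Dmet μ f w u = ⊤
  · rw [htop]; exact le_top
  have h1t : Dmet μ f z w ≠ ⊤ := fun h => htop (by rw [h, top_add])
  have h2t : Dmet μ f w u ≠ ⊤ := fun h => htop (by rw [h, add_top])
  refine ENNReal.le_of_forall_pos_le_add fun ε hε _ => ?_
  have hεhalf : ((ε : ℝ≥0∞) / 2) ≠ 0 := by
    simp [ENNReal.div_eq_zero_iff, ne_of_gt hε]
  obtain ⟨n, p, hp0, hp1, hps⟩ := exists_path_of_lt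
    (ENNReal.lt_add_right h1t hεhalf : Dmet μ f z w < Dmet μ f z w + ↑ε / 2)
  obtain ⟨m, q, hq0, hq1, hqs⟩ := exists_path_of_lt
    (ENNReal.lt_add_right h2t hεhalf : Dmet μ f w u < Dmet μ f w u + ↑ε / 2)
  -- concatenated path
  set r : Fin (n + m + 1) → E := fun i =>
    if h : (i : ℕ) ≤ n then p ⟨i, by omega⟩ else q ⟨(i : ℕ) - n, by omega⟩ with hr
  have hrp : ∀ (i : Fin (n + m + 1)) (h : (i : ℕ) ≤ n), r i = p ⟨i, by omega⟩ :=
    fun i h => dif_pos h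
  have hrq : ∀ (i : Fin (n + m + 1)) (h : ¬ (i : ℕ) ≤ n), r i = q ⟨(i : ℕ) - n, by omega⟩ :=
    fun i h => dif_neg h
  have hr0 : r 0 = z := by
    rw [hrp 0 (by simp), ← hp0]
    exact congrArg p (Fin.ext (by simp))
  have hrlast : r (Fin.last (n + m)) = u := by
    by_cases hm : m = 0
    · subst hm
      have hwu : w = u := by
        rw [← hq1, ← hq0]
        exact congrArg q (Fin.ext (by simp [Fin.val_last]))
      rw [hrp _ (by simp), ← hwu, ← hp1]
      exact congrArg p (Fin.ext (by simp))
    · rw [hrq _ (by simp [Fin.val_last]; exact hm), ← hq1]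
      refine congrArg q (Fin.ext ?_)
      simp [Fin.val_last]
  have hsum : ∑ i : Fin (n + m), segLen μ f (r i.castSucc) (r i.succ)
      = (∑ i : Fin n, segLen μ f (p i.castSucc) (p i.succ))
        + ∑ i : Fin m, segLen μ f (q i.castSucc) (q i.succ) := by
    rw [Fin.sum_univ_add]
    congr 1
    · refine Finset.sum_congr rfl fun i _ => ?_
      have e1 : r (Fin.castAdd m i).castSucc = p i.castSucc := by
        rw [hrp _ (by simp [Fin.coe_castSucc, Fin.coe_castAdd])]
        exact congrArg p (Fin.ext (by simp))
      have e2 : r (Fin.castAdd m i).succ = p i.succ := by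
        rw [hrp _ (by simp [Fin.val_succ, Fin.coe_castAdd])]
        exact congrArg p (Fin.ext (by simp [Fin.val_succ]))
      rw [e1, e2]
    · refine Finset.sum_congr rfl fun j _ => ?_
      have e3 : r (Fin.natAdd n j).castSucc = q j.castSucc := by
        by_cases hj : (j : ℕ) = 0
        · rw [hrp _ (by simp [Fin.coe_castSucc, Fin.coe_natAdd, hj]),
            show q j.castSucc = w from by
              rw [← hq0]; exact congrArg q (Fin.ext (by simp [hj])),
            ← hp1]
          exact congrArg p (Fin.ext (by simp [Fin.coe_castSucc, Fin.coe_natAdd, hj]))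
        · rw [hrq _ (by simp [Fin.coe_castSucc, Fin.coe_natAdd]; omega)]
          refine congrArg q (Fin.ext ?_)
          simp [Fin.coe_castSucc, Fin.coe_natAdd]
      have e4 : r (Fin.natAdd n j).succ = q j.succ := by
        rw [hrq _ (by simp [Fin.val_succ, Fin.coe_natAdd])]
        refine congrArg q (Fin.ext ?_)
        simp [Fin.val_succ, Fin.coe_natAdd]
        omega
      rw [e3, e4]
  have hle := Dmet_le_path (μ := μ) (f := f) (n + m) r hr0 hrlast
  rw [hsum] at hle
  calc Dmet μ f z u ≤ _ + _ := hle
    _ ≤ (Dmet μ f z w + ↑ε / 2) + (Dmet μ f w u + ↑ε / 2) := add_le_add hps.le hqs.le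
    _ = (Dmet μ f z w + Dmet μ f w u) + (↑ε / 2 + ↑ε / 2) := by ring
    _ = (Dmet μ f z w + Dmet μ f w u) + ↑ε := by rw [ENNReal.add_halves]

lemma segLen_ge_aux (z : E) (ε cμ κ : ℝ)
    (hμ_lb : ∀ v : E, cμ * ‖v‖ ≤ μ v) (hcμ : 0 < cμ) (hκ : 0 ≤ κ) (hε : 0 < ε)
    (hball : ∀ u : E, ‖u - z‖ ≤ ε → κ ≤ (f u)⁻¹) (a b : E) :
    ENNReal.ofReal (cμ * κ * |min ‖b - z‖ ε - min ‖a - z‖ ε|) ≤ segLen μ f a b := by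
  rcases eq_or_ne a b with rfl | hab
  · simp
  have hΔ : (0:ℝ) < ‖b - a‖ := by
    rw [norm_pos_iff, sub_ne_zero]
    exact Ne.symm hab
  have key : ∀ x y : ℝ, 0 ≤ x → x < y → y ≤ 1 →
      (∀ t ∈ Set.Ioo x y, ‖a + t • (b - a) - z‖ ≤ ε) →
      ENNReal.ofReal (cμ * κ * ((y - x) * ‖b - a‖)) ≤ segLen μ f a b := by
    intro x y hx hxy hy1 hmem
    have hμnn : 0 ≤ μ (b - a) := le_trans (by positivity) (hμ_lb (b - a))
    have h1 : ENNReal.ofReal κ * ENNReal.ofReal (y - x)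
        ≤ ∫⁻ t in Set.Ioo (0:ℝ) 1, ENNReal.ofReal ((f (a + t • (b - a)))⁻¹) := by
      have hA : ENNReal.ofReal κ * ENNReal.ofReal (y - x)
          = ∫⁻ _ in Set.Ioo x y, ENNReal.ofReal κ := by
        rw [setLIntegral_const, Real.volume_Ioo]
      rw [hA]
      refine le_trans ?_
        (lintegral_mono' (Measure.restrict_mono (Set.Ioo_subset_Ioo hx hy1) le_rfl) le_rfl)
      exact lintegral_mono_ae ((ae_restrict_iff' measurableSet_Ioo).2
        (Filter.Eventually.of_forall fun t ht =>
          ENNReal.ofReal_le_ofReal (hball _ (hmem t ht))))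
    calc ENNReal.ofReal (cμ * κ * ((y - x) * ‖b - a‖))
        ≤ ENNReal.ofReal (μ (b - a) * (κ * (y - x))) := by
          apply ENNReal.ofReal_le_ofReal
          have h2 := mul_le_mul_of_nonneg_right (hμ_lb (b - a))
            (mul_nonneg hκ (by linarith : (0:ℝ) ≤ y - x))
          calc cμ * κ * ((y - x) * ‖b - a‖) = (cμ * ‖b - a‖) * (κ * (y - x)) := by ring
            _ ≤ μ (b - a) * (κ * (y - x)) := h2
      _ = ENNReal.ofReal (μ (b - a)) * (ENNReal.ofReal κ * ENNReal.ofReal (y - x)) := by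
          rw [ENNReal.ofReal_mul hμnn, ENNReal.ofReal_mul hκ]
      _ ≤ ENNReal.ofReal (μ (b - a)) *
            ∫⁻ t in Set.Ioo (0:ℝ) 1, ENNReal.ofReal ((f (a + t • (b - a)))⁻¹) :=
          mul_le_mul_right h1 _
      _ = segLen μ f a b := rfl
  have hBA : |‖b - z‖ - ‖a - z‖| ≤ ‖b - a‖ := by
    rw [abs_sub_le_iff]
    constructor
    · have h := norm_sub_norm_le (b - z) (a - z)
      have e : (b - z) - (a - z) = b - a := by abel
      rwa [e] at h
    · have h := norm_sub_norm_le (a - z) (b - z)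
      have e : (a - z) - (b - z) = a - b := by abel
      rw [e, norm_sub_rev a b] at h
      exact h
  have hkey2 : |min ‖b - z‖ ε - min ‖a - z‖ ε| ≤ ‖b - a‖ :=
    le_trans abs_min_sub_min_le hBA
  rcases lt_or_ge ‖a - z‖ ε with hA | hA
  · rcases lt_or_ge ‖b - z‖ ε with hB | hB
    · -- both endpoints inside the ball
      refine le_trans (ENNReal.ofReal_le_ofReal ?_) (key 0 1 le_rfl one_pos le_rfl ?_)
      · have h1 : |min ‖b - z‖ ε - min ‖a - z‖ ε| ≤ (1 - 0) * ‖b - a‖ := by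
          rw [show (1 - (0:ℝ)) * ‖b - a‖ = ‖b - a‖ from by ring]
          exact hkey2
        exact mul_le_mul_of_nonneg_left h1 (by positivity)
      · intro t ht
        have hid : a + t • (b - a) - z = (1 - t) • (a - z) + t • (b - z) := by
          rw [sub_smul, one_smul, smul_sub, smul_sub, smul_sub]
          abel
        rw [hid]
        have h1t : (0:ℝ) ≤ 1 - t := by linarith [ht.2]
        calc ‖(1 - t) • (a - z) + t • (b - z)‖
            ≤ ‖(1 - t) • (a - z)‖ + ‖t • (b - z)‖ := norm_add_le _ _
          _ = (1 - t) * ‖a - z‖ + t * ‖b - z‖ := by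
              rw [norm_smul, norm_smul, Real.norm_eq_abs, Real.norm_eq_abs,
                abs_of_nonneg h1t, abs_of_nonneg ht.1.le]
          _ ≤ (1 - t) * ε + t * ε :=
              add_le_add (mul_le_mul_of_nonneg_left hA.le h1t)
                (mul_le_mul_of_nonneg_left hB.le ht.1.le)
          _ = ε := by ring
    · -- a inside, b outside
      set s : ℝ := (ε - ‖a - z‖) / ‖b - a‖ with hs
      have hs0 : 0 < s := div_pos (by linarith) hΔ
      have hBA' : ‖b - z‖ - ‖a - z‖ ≤ ‖b - a‖ := le_trans (le_abs_self _) hBA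
      have hsle : s ≤ 1 := by
        rw [hs, div_le_one hΔ]
        linarith
      have hmem : ∀ t ∈ Set.Ioo (0:ℝ) s, ‖a + t • (b - a) - z‖ ≤ ε := by
        intro t ht
        have hid : a + t • (b - a) - z = (a - z) + t • (b - a) := by abel
        have hsmul : s * ‖b - a‖ = ε - ‖a - z‖ := by
          rw [hs]; field_simp
        calc ‖a + t • (b - a) - z‖ = ‖(a - z) + t • (b - a)‖ := by rw [hid]
          _ ≤ ‖a - z‖ + t * ‖b - a‖ := by
              refine le_trans (norm_add_le _ _) ?_
              rw [norm_smul, Real.norm_eq_abs, abs_of_nonneg ht.1.le]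
          _ ≤ ‖a - z‖ + s * ‖b - a‖ := by
              have := mul_le_mul_of_nonneg_right ht.2.le hΔ.le
              linarith
          _ = ε := by rw [hsmul]; ring
      refine le_trans (ENNReal.ofReal_le_ofReal ?_) (key 0 s le_rfl hs0 hsle hmem)
      rw [min_eq_right hB, min_eq_left hA.le, abs_of_nonneg (by linarith)]
      have hsmul : (s - 0) * ‖b - a‖ = ε - ‖a - z‖ := by
        rw [hs]; field_simp; ring
      rw [hsmul]
  · rcases lt_or_ge ‖b - z‖ ε with hB | hB
    · -- b inside, a outside
      set s : ℝ := (ε - ‖b - z‖) / ‖b - a‖ with hs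
      have hs0 : 0 < s := div_pos (by linarith) hΔ
      have hBA' : ‖a - z‖ - ‖b - z‖ ≤ ‖b - a‖ := by
        have := neg_abs_le (‖b - z‖ - ‖a - z‖)
        linarith [hBA]
      have hsle : s ≤ 1 := by
        rw [hs, div_le_one hΔ]
        linarith
      have hmem : ∀ t ∈ Set.Ioo (1 - s) 1, ‖a + t • (b - a) - z‖ ≤ ε := by
        intro t ht
        have hid : a + t • (b - a) - z = (b - z) - (1 - t) • (b - a) := by
          rw [sub_smul, one_smul]; abel
        have h1t : (0:ℝ) ≤ 1 - t := by linarith [ht.2]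
        have h1ts : 1 - t ≤ s := by linarith [ht.1]
        have hsmul : s * ‖b - a‖ = ε - ‖b - z‖ := by
          rw [hs]; field_simp
        calc ‖a + t • (b - a) - z‖ = ‖(b - z) - (1 - t) • (b - a)‖ := by rw [hid]
          _ ≤ ‖b - z‖ + (1 - t) * ‖b - a‖ := by
              refine le_trans (norm_sub_le _ _) ?_
              rw [norm_smul, Real.norm_eq_abs, abs_of_nonneg h1t]
          _ ≤ ‖b - z‖ + s * ‖b - a‖ := by
              have := mul_le_mul_of_nonneg_right h1ts hΔ.le
              linarith
          _ = ε := by rw [hsmul]; ring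
      refine le_trans (ENNReal.ofReal_le_ofReal ?_) (key (1 - s) 1 (by linarith) (by linarith)
        le_rfl hmem)
      rw [min_eq_left hB.le, min_eq_right hA]
      rw [show |‖b - z‖ - ε| = ε - ‖b - z‖ from by rw [abs_of_nonpos (by linarith)]; ring]
      have hsmul : (1 - (1 - s)) * ‖b - a‖ = ε - ‖b - z‖ := by
        rw [show (1 - (1 - s)) = s from by ring, hs]; field_simp
      rw [hsmul]
    · -- both endpoints outside
      rw [min_eq_right hA, min_eq_right hB]
      simp

lemma Dmet_pos_of_ne {z w : E} (hz : z ≠ 0) (hzw : z ≠ w)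
    (cμ M : ℝ) (hcμ : 0 < cμ) (hμ_lb : ∀ v : E, cμ * ‖v‖ ≤ μ v)
    (hM : 0 < M) (hMb : ∀ u : E, u ≠ 0 → M⁻¹ * ‖u‖ ^ (-α) ≤ (f u)⁻¹) :
    0 < Dmet μ f z w := by
  have hzn : 0 < ‖z‖ := norm_pos_iff.mpr hz
  set ε : ℝ := ‖z‖ / 2 with hε
  have hε0 : 0 < ε := by positivity
  set κ : ℝ := M⁻¹ * min (ε ^ (-α)) ((3 * ε) ^ (-α)) with hκ
  have hκ0 : 0 < κ := by
    apply mul_pos (inv_pos.2 hM)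
    exact lt_min (Real.rpow_pos_of_pos hε0 _) (Real.rpow_pos_of_pos (by linarith) _)
  have hball : ∀ u : E, ‖u - z‖ ≤ ε → κ ≤ (f u)⁻¹ := by
    intro u hu
    have hu' : ‖z - u‖ ≤ ε := by rwa [norm_sub_rev]
    have hun : ε ≤ ‖u‖ := by
      have h := norm_sub_norm_le z u
      have hz2 : ‖z‖ = 2 * ε := by rw [hε]; ring
      linarith
    have hun2 : ‖u‖ ≤ 3 * ε := by
      have h : ‖u‖ ≤ ‖u - z‖ + ‖z‖ := by
        have := norm_add_le (u - z) z
        simpa using this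
      have hz2 : ‖z‖ = 2 * ε := by rw [hε]; ring
      linarith
    have hu0 : u ≠ 0 := by
      intro h
      rw [h] at hun
      simp at hun
      linarith
    refine le_trans ?_ (hMb u hu0)
    rw [hκ]
    refine mul_le_mul_of_nonneg_left ?_ (inv_nonneg.2 hM.le)
    rcases le_or_gt α 0 with hα' | hα'
    · exact le_trans (min_le_left _ _) (Real.rpow_le_rpow hε0.le hun (by linarith))
    · exact le_trans (min_le_right _ _)
        (Real.rpow_le_rpow_of_nonpos (norm_pos_iff.mpr hu0) hun2 (by linarith))
  set δ : ℝ := cμ * κ * min ‖w - z‖ ε with hδ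
  have hwz : 0 < ‖w - z‖ := by
    rw [norm_pos_iff, sub_ne_zero]
    exact Ne.symm hzw
  have hδ0 : 0 < δ := by
    apply mul_pos (mul_pos hcμ hκ0)
    exact lt_min hwz hε0
  have hlow : ENNReal.ofReal δ ≤ Dmet μ f z w := by
    refine le_iInf fun n => le_iInf fun p => le_iInf fun h0 => le_iInf fun h1 => ?_
    have hseg : ∀ i : Fin n,
        ENNReal.ofReal (cμ * κ * |min ‖p i.succ - z‖ ε - min ‖p i.castSucc - z‖ ε|)
          ≤ segLen μ f (p i.castSucc) (p i.succ) :=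
      fun i => segLen_ge_aux z ε cμ κ hμ_lb hcμ hκ0.le hε0 hball _ _
    calc ENNReal.ofReal δ
        ≤ ENNReal.ofReal (∑ i : Fin n,
            cμ * κ * |min ‖p i.succ - z‖ ε - min ‖p i.castSucc - z‖ ε|) := by
          apply ENNReal.ofReal_le_ofReal
          rw [hδ, ← Finset.mul_sum]
          refine mul_le_mul_of_nonneg_left ?_ (by positivity)
          have htel := fin_sum_telescope n (fun i => min ‖p i - z‖ ε)
          have h00 : min ‖p 0 - z‖ ε = 0 := by
            rw [h0]
            simp [hε0.le]
          calc min ‖w - z‖ ε = |min ‖p (Fin.last n) - z‖ ε - min ‖p 0 - z‖ ε| := by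
                rw [h1, h00, sub_zero, abs_of_nonneg (le_min (norm_nonneg _) hε0.le)]
            _ = |∑ i : Fin n, (min ‖p i.succ - z‖ ε - min ‖p i.castSucc - z‖ ε)| := by
                rw [htel]
            _ ≤ ∑ i : Fin n, |min ‖p i.succ - z‖ ε - min ‖p i.castSucc - z‖ ε| :=
                Finset.abs_sum_le_sum_abs _ _
      _ = ∑ i : Fin n,
            ENNReal.ofReal (cμ * κ * |min ‖p i.succ - z‖ ε - min ‖p i.castSucc - z‖ ε|) :=
          ENNReal.ofReal_sum_of_nonneg (fun i _ => by positivity)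
      _ ≤ ∑ i : Fin n, segLen μ f (p i.castSucc) (p i.succ) :=
          Finset.sum_le_sum fun i _ => hseg i
  exact lt_of_lt_of_le (ENNReal.ofReal_pos.2 hδ0) hlow

lemma exists_M (hd : 0 < d) (f₀ : E → ℝ) {K : NNReal}
    (hLip : LipschitzOnWith K f₀ (sphere (0 : E) 1))
    (hpos : ∀ z ∈ sphere (0 : E) 1, 0 < f₀ z) :
    ∃ M : ℝ, 0 < M ∧ ∀ u ∈ sphere (0 : E) 1, f₀ u ≤ M := by
  haveI : Nontrivial (EuclideanSpace ℝ (Fin d)) :=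
    Module.nontrivial_of_finrank_pos (R := ℝ)
      (by rw [finrank_euclideanSpace_fin]; exact hd)
  have hne : (sphere (0 : E) 1).Nonempty := NormedSpace.sphere_nonempty.2 zero_le_one
  obtain ⟨x, hx, hmax⟩ := (isCompact_sphere (0 : E) 1).exists_isMaxOn hne hLip.continuousOn
  exact ⟨f₀ x, hpos x hx, fun u hu => hmax hu⟩

lemma exists_c (hd : 0 < d)
    (hμ_add : ∀ z w : E, μ (z + w) ≤ μ z + μ w)
    (hμ_smul : ∀ (c : ℝ) (z : E), μ (c • z) = |c| * μ z)
    (hμ_eq : ∀ z : E, μ z = 0 ↔ z = 0) :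
    ∃ c : ℝ, 0 < c ∧ ∀ v : E, c * ‖v‖ ≤ μ v := by
  haveI : Nontrivial (EuclideanSpace ℝ (Fin d)) :=
    Module.nontrivial_of_finrank_pos (R := ℝ)
      (by rw [finrank_euclideanSpace_fin]; exact hd)
  have hμ0 : μ 0 = 0 := (hμ_eq 0).2 rfl
  have hμneg : ∀ v : E, μ (-v) = μ v := by
    intro v
    have e : (-v : E) = (-1 : ℝ) • v := by simp
    rw [e, hμ_smul]; simp
  have hμnn : ∀ v : E, 0 ≤ μ v := by
    intro v
    have h := hμ_add v (-v)
    have e : v + -v = (0 : E) := by abel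
    rw [e, hμ0, hμneg] at h
    linarith
  have hsum : ∀ (g : Fin d → E), μ (∑ i, g i) ≤ ∑ i, μ (g i) := by
    intro g
    have hgen : ∀ s : Finset (Fin d), μ (∑ i ∈ s, g i) ≤ ∑ i ∈ s, μ (g i) := by
      intro s
      induction s using Finset.induction_on with
      | empty => simp [hμ0]
      | insert _ _ hnotmem ih =>
        rw [Finset.sum_insert hnotmem, Finset.sum_insert hnotmem]
        exact le_trans (hμ_add _ _) (by linarith)
    exact hgen Finset.univ
  set C : ℝ := (∑ i, μ (EuclideanSpace.single i (1:ℝ))) + 1 with hC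
  have hCsum : 0 ≤ ∑ i, μ (EuclideanSpace.single i (1:ℝ)) :=
    Finset.sum_nonneg fun i _ => hμnn _
  have hC0 : 0 < C := by rw [hC]; linarith
  have hub : ∀ v : E, μ v ≤ C * ‖v‖ := by
    intro v
    have hrepr : v = ∑ i, (v i) • EuclideanSpace.single i (1:ℝ) := by
      calc v = ∑ i, (EuclideanSpace.basisFun (Fin d) ℝ).repr v i •
            (EuclideanSpace.basisFun (Fin d) ℝ) i :=
            ((EuclideanSpace.basisFun (Fin d) ℝ).sum_repr v).symm
        _ = ∑ i, (v i) • EuclideanSpace.single i (1:ℝ) :=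
            Finset.sum_congr rfl fun i _ => by
              rw [EuclideanSpace.basisFun_repr, EuclideanSpace.basisFun_apply]
    have habs : ∀ i, |v i| ≤ ‖v‖ := by
      intro i
      rw [EuclideanSpace.norm_eq]
      rw [show |v i| = Real.sqrt (‖v i‖ ^ 2) from by
        rw [Real.norm_eq_abs, Real.sqrt_sq (abs_nonneg _)]]
      exact Real.sqrt_le_sqrt
        (Finset.single_le_sum (f := fun j => ‖v j‖ ^ 2) (fun j _ => by positivity)
          (Finset.mem_univ i))
    calc μ v = μ (∑ i, (v i) • EuclideanSpace.single i (1:ℝ)) := by rw [← hrepr]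
      _ ≤ ∑ i, μ ((v i) • EuclideanSpace.single i (1:ℝ)) := hsum _
      _ = ∑ i, |v i| * μ (EuclideanSpace.single i (1:ℝ)) :=
          Finset.sum_congr rfl fun i _ => hμ_smul _ _
      _ ≤ ∑ i, ‖v‖ * μ (EuclideanSpace.single i (1:ℝ)) :=
          Finset.sum_le_sum fun i _ => mul_le_mul_of_nonneg_right (habs i) (hμnn _)
      _ = (∑ i, μ (EuclideanSpace.single i (1:ℝ))) * ‖v‖ := by
          rw [← Finset.mul_sum, mul_comm]
      _ ≤ C * ‖v‖ := mul_le_mul_of_nonneg_right (by rw [hC]; linarith) (norm_nonneg v)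
  have hcont : Continuous μ := by
    have hlip : ∀ x y : E, |μ x - μ y| ≤ C * ‖x - y‖ := by
      intro x y
      have h1 : μ x ≤ μ y + μ (x - y) := by
        have h := hμ_add y (x - y)
        have e : y + (x - y) = x := by abel
        rwa [e] at h
      have h2 : μ y ≤ μ x + μ (y - x) := by
        have h := hμ_add x (y - x)
        have e : x + (y - x) = y := by abel
        rwa [e] at h
      rw [abs_sub_le_iff]
      constructor
      · linarith [hub (x - y)]
      · have h3 := hub (y - x)
        rw [norm_sub_rev] at h3
        linarith
    refine (LipschitzWith.of_dist_le_mul (K := ⟨C, hC0.le⟩) fun x y => ?_).continuous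
    rw [Real.dist_eq, dist_eq_norm]
    exact hlip x y
  have hne : (sphere (0 : E) 1).Nonempty := NormedSpace.sphere_nonempty.2 zero_le_one
  obtain ⟨x0, hx0, hmin⟩ := (isCompact_sphere (0 : E) 1).exists_isMinOn hne hcont.continuousOn
  have hx0n : ‖x0‖ = 1 := mem_sphere_zero_iff_norm.1 hx0
  have hx0ne : x0 ≠ 0 := by
    intro h
    rw [h] at hx0n
    simp at hx0n
  have hc0 : 0 < μ x0 :=
    lt_of_le_of_ne (hμnn x0) (Ne.symm fun h => hx0ne ((hμ_eq x0).1 h))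
  refine ⟨μ x0, hc0, fun v => ?_⟩
  rcases eq_or_ne v 0 with rfl | hv
  · simp [hμ0]
  · have hvn : 0 < ‖v‖ := norm_pos_iff.mpr hv
    have hmem : ‖v‖⁻¹ • v ∈ sphere (0 : E) 1 := by
      rw [mem_sphere_zero_iff_norm]
      exact norm_smul_inv_norm hv
    have h := isMinOn_iff.1 hmin _ hmem
    rw [hμ_smul, abs_of_nonneg (by positivity : (0:ℝ) ≤ ‖v‖⁻¹)] at h
    calc μ x0 * ‖v‖ ≤ (‖v‖⁻¹ * μ v) * ‖v‖ := mul_le_mul_of_nonneg_right h hvn.le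
      _ = μ v := by field_simp

lemma segLen_zero_lt_top (hα : α < 1) (f₀ : E → ℝ)
    (hpos : ∀ z ∈ sphere (0 : E) 1, 0 < f₀ z)
    (hf0 : f 0 = 0) (hf : ∀ z : E, z ≠ 0 → f z = ‖z‖ ^ α * f₀ (‖z‖⁻¹ • z))
    (hμ_eq : ∀ z : E, μ z = 0 ↔ z = 0) (z : E) :
    segLen μ f 0 z < ⊤ := by
  rcases eq_or_ne z 0 with rfl | hz
  · unfold segLen
    rw [show (0 : E) - 0 = 0 from by abel, (hμ_eq 0).2 rfl]
    simp
  · have hmem : ‖z‖⁻¹ • z ∈ sphere (0 : E) 1 := by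
      rw [mem_sphere_zero_iff_norm]
      exact norm_smul_inv_norm hz
    have hfz : 0 < f z := by
      rw [hf z hz]
      exact mul_pos (Real.rpow_pos_of_pos (norm_pos_iff.mpr hz) _) (hpos _ hmem)
    have hpt : ∀ᵐ t ∂(volume : Measure ℝ), t ∈ Set.Ioo (0:ℝ) 1 →
        ENNReal.ofReal ((f ((0:E) + t • (z - 0)))⁻¹)
          = ENNReal.ofReal ((f z)⁻¹) * ENNReal.ofReal (t ^ (-α)) := by
      refine Filter.Eventually.of_forall fun t ht => ?_
      have h1 : (0:E) + t • (z - 0) = t • z := by simp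
      rw [h1, f_smul f₀ hf0 hf ht.1, mul_inv, ← Real.rpow_neg ht.1.le, mul_comm,
        ENNReal.ofReal_mul (inv_nonneg.mpr hfz.le)]
    unfold segLen
    rw [setLIntegral_congr_fun_ae measurableSet_Ioo hpt,
      lintegral_const_mul' _ _ ENNReal.ofReal_ne_top]
    have hint : (∫⁻ t in Set.Ioo (0:ℝ) 1, ENNReal.ofReal (t ^ (-α))) < ⊤ := by
      have h := intervalIntegral.intervalIntegrable_rpow' (a := 0) (b := 1) (r := -α)
        (by linarith)
      rw [intervalIntegrable_iff, Set.uIoc_of_le zero_le_one] at h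
      exact (h.mono_set Set.Ioo_subset_Ioc_self).setLIntegral_lt_top
    exact ENNReal.mul_lt_top ENNReal.ofReal_lt_top
      (ENNReal.mul_lt_top ENNReal.ofReal_lt_top hint)

lemma Dmet_lt_top (hα : α < 1) (f₀ : E → ℝ)
    (hpos : ∀ z ∈ sphere (0 : E) 1, 0 < f₀ z)
    (hf0 : f 0 = 0) (hf : ∀ z : E, z ≠ 0 → f z = ‖z‖ ^ α * f₀ (‖z‖⁻¹ • z))
    (hμ_smul : ∀ (c : ℝ) (z : E), μ (c • z) = |c| * μ z)
    (hμ_eq : ∀ z : E, μ z = 0 ↔ z = 0) (z w : E) :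
    Dmet μ f z w < ⊤ := by
  have hle := Dmet_le_path (μ := μ) (f := f) 2 ![z, 0, w] rfl rfl
  refine lt_of_le_of_lt hle ?_
  have hsum : ∑ i : Fin 2, segLen μ f (![z, 0, w] i.castSucc) (![z, 0, w] i.succ)
      = segLen μ f z 0 + segLen μ f 0 w := by
    rw [Fin.sum_univ_two]
    rfl
  rw [hsum]
  have h1 : segLen μ f z 0 < ⊤ := by
    rw [segLen_symm hμ_smul]
    exact segLen_zero_lt_top hα f₀ hpos hf0 hf hμ_eq z
  exact ENNReal.add_lt_top.2 ⟨h1, segLen_zero_lt_top hα f₀ hpos hf0 hf hμ_eq w⟩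

end Aux

theorem stmt2 (d : ℕ) (hd : 0 < d) (α : ℝ) (hα : α < 1)
    (f₀ : EuclideanSpace ℝ (Fin d) → ℝ) (K : NNReal)
    (hLip : LipschitzOnWith K f₀ (sphere (0 : EuclideanSpace ℝ (Fin d)) 1))
    (hpos : ∀ z ∈ sphere (0 : EuclideanSpace ℝ (Fin d)) 1, 0 < f₀ z)
    (f : EuclideanSpace ℝ (Fin d) → ℝ) (hf0 : f 0 = 0)
    (hf : ∀ z : EuclideanSpace ℝ (Fin d), z ≠ 0 → f z = ‖z‖ ^ α * f₀ (‖z‖⁻¹ • z))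
    (μ : EuclideanSpace ℝ (Fin d) → ℝ)
    (hμ_add : ∀ z w, μ (z + w) ≤ μ z + μ w)
    (hμ_smul : ∀ (c : ℝ) z, μ (c • z) = |c| * μ z)
    (hμ_eq : ∀ z, μ z = 0 ↔ z = 0) :
    (∀ z w : EuclideanSpace ℝ (Fin d), Dmet μ f z w < ⊤) ∧
    (∀ z w : EuclideanSpace ℝ (Fin d), Dmet μ f z w = Dmet μ f w z) ∧
    (∀ z w u : EuclideanSpace ℝ (Fin d), Dmet μ f z u ≤ Dmet μ f z w + Dmet μ f w u) ∧
    (∀ z w : EuclideanSpace ℝ (Fin d), Dmet μ f z w = 0 ↔ z = w) ∧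
    (∀ r : ℝ, 0 < r →
      {z : EuclideanSpace ℝ (Fin d) | Dmet μ f 0 z ≤ ENNReal.ofReal r} =
        (r ^ ((1 : ℝ) / (1 - α))) •
          {z : EuclideanSpace ℝ (Fin d) | Dmet μ f 0 z ≤ 1}) := by
  obtain ⟨M, hM0, hMle⟩ := exists_M hd f₀ hLip hpos
  obtain ⟨cμ, hcμ0, hcμle⟩ := exists_c hd hμ_add hμ_smul hμ_eq
  have hMb : ∀ u : EuclideanSpace ℝ (Fin d), u ≠ 0 → M⁻¹ * ‖u‖ ^ (-α) ≤ (f u)⁻¹ := by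
    intro u hu
    have hmem : ‖u‖⁻¹ • u ∈ sphere (0 : EuclideanSpace ℝ (Fin d)) 1 := by
      rw [mem_sphere_zero_iff_norm]
      exact norm_smul_inv_norm hu
    rw [hf u hu, mul_inv, ← Real.rpow_neg (norm_nonneg u), mul_comm (M⁻¹)]
    refine mul_le_mul_of_nonneg_left ?_ (by positivity)
    exact inv_anti₀ (hpos _ hmem) (hMle _ hmem)
  have hfin : ∀ z w : EuclideanSpace ℝ (Fin d), Dmet μ f z w < ⊤ :=
    fun z w => Dmet_lt_top hα f₀ hpos hf0 hf hμ_smul hμ_eq z w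
  have hsymm : ∀ z w : EuclideanSpace ℝ (Fin d), Dmet μ f z w = Dmet μ f w z :=
    fun z w => Dmet_symm hμ_smul z w
  have htri : ∀ z w u : EuclideanSpace ℝ (Fin d),
      Dmet μ f z u ≤ Dmet μ f z w + Dmet μ f w u :=
    fun z w u => Dmet_triangle z w u
  have hzero : ∀ z w : EuclideanSpace ℝ (Fin d), Dmet μ f z w = 0 ↔ z = w := by
    intro z w
    constructor
    · intro h
      by_contra hne
      rcases eq_or_ne z 0 with rfl | hz
      · have hw : w ≠ (0 : EuclideanSpace ℝ (Fin d)) := fun h' => hne (by rw [h'])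
        have hpos' := Dmet_pos_of_ne (μ := μ) (f := f) hw (fun h' => hne h'.symm)
          cμ M hcμ0 hcμle hM0 hMb
        rw [hsymm, h] at hpos'
        exact lt_irrefl _ hpos'
      · have hpos' := Dmet_pos_of_ne (μ := μ) (f := f) hz hne cμ M hcμ0 hcμle hM0 hMb
        rw [h] at hpos'
        exact lt_irrefl _ hpos'
    · rintro rfl
      exact Dmet_self z
  refine ⟨hfin, hsymm, htri, hzero, ?_⟩
  intro r hr
  have h1α : (0:ℝ) < 1 - α := by linarith
  set c : ℝ := r ^ ((1:ℝ) / (1 - α)) with hc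
  have hc0 : 0 < c := Real.rpow_pos_of_pos hr _
  have hcr : c ^ (1 - α) = r := by
    rw [hc, ← Real.rpow_mul hr.le, one_div_mul_cancel (ne_of_gt h1α), Real.rpow_one]
  ext v
  simp only [Set.mem_setOf_eq]
  rw [Set.mem_smul_set_iff_inv_smul_mem₀ (ne_of_gt hc0)]
  simp only [Set.mem_setOf_eq]
  have hD : Dmet μ f 0 v = ENNReal.ofReal r * Dmet μ f 0 (c⁻¹ • v) := by
    have h := Dmet_smul (μ := μ) (f := f) f₀ hf0 hf hμ_smul hc0 (0 : EuclideanSpace ℝ (Fin d))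
      (c⁻¹ • v)
    rw [smul_zero, smul_inv_smul₀ (ne_of_gt hc0)] at h
    rw [h, hcr]
  rw [hD]
  have hrne : ENNReal.ofReal r ≠ 0 := ne_of_gt (ENNReal.ofReal_pos.2 hr)
  constructor
  · intro h
    exact (ENNReal.mul_le_mul_iff_right hrne ENNReal.ofReal_ne_top).1
      (le_trans h (le_of_eq (mul_one _).symm))
  · intro h
    exact le_trans ((ENNReal.mul_le_mul_iff_right hrne ENNReal.ofReal_ne_top).2 h)
      (le_of_eq (mul_one _))
end

section
/- For all z, w ∈ ℝ^d∖{0} the following lower bounds hold: (i) if α ∈ [0,∞) and α ≠ 1, then D(z,w) ≥ (|z|^{1−α} − (|z| + ρ̄·μ(w−z))^{1−α}) / (ρ̄ · κ̄ · (α−1)); (ii) if α = 1, then D(z,w) ≥ (ρ̄ κ̄)^{-1} · log((|z| + ρ̄·μ(w−z)) / |z|); (iii) if α < 0 and ρ̄·μ(w−z) ≤ |z|, then D(z,w) ≥ (|z|^{1−α} − (|z| − ρ̄·μ(w−z))^{1−α}) / (ρ̄ · κ̄ · (1−α)). -/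
open MeasureTheory Metric
open scoped ENNReal NNReal Pointwise

/-- conversion between lintegral over Ioo and interval integral for continuous nonneg G -/
lemma lint_eq (G : ℝ → ℝ) (hGc : Continuous G) (hGnn : ∀ s, 0 ≤ G s) (a b : ℝ) (hab : a ≤ b) :
    ENNReal.ofReal (∫ s in a..b, G s) = ∫⁻ s in Set.Ioo a b, ENNReal.ofReal (G s) := by
  rw [intervalIntegral.integral_of_le hab, integral_Ioc_eq_integral_Ioo]
  exact MeasureTheory.ofReal_integral_eq_lintegral_ofReal
    (hGc.integrableOn_Icc.mono_set Set.Ioo_subset_Icc_self)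
    (Filter.Eventually.of_forall hGnn)

lemma seg_lower {d : ℕ} (μ f : EuclideanSpace ℝ (Fin d) → ℝ)
    (hμ_smul : ∀ (c : ℝ) x, μ (c • x) = |c| * μ x)
    (hμ_add : ∀ x y, μ (x + y) ≤ μ x + μ y)
    (hμ_eq : ∀ x, μ x = 0 ↔ x = 0)
    (G : ℝ → ℝ) (hGc : Continuous G) (hGnn : ∀ s, 0 ≤ G s) (hGanti : Antitone G)
    (z : EuclideanSpace ℝ (Fin d))
    (hkey : ∀ x : EuclideanSpace ℝ (Fin d), x ≠ 0 → G (μ (x - z)) ≤ (f x)⁻¹)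
    (a b : EuclideanSpace ℝ (Fin d)) (c : ℝ) (hc : μ (a - z) ≤ c) :
    ∫⁻ s in Set.Ioo c (c + μ (b - a)), ENNReal.ofReal (G s) ≤ segLen μ f a b := by
  have hμ0 : μ 0 = 0 := (hμ_eq 0).2 rfl
  have hμnn : ∀ x, 0 ≤ μ x := by
    intro x
    have h1 : μ ((-1:ℝ) • x) = μ x := by rw [hμ_smul]; simp
    have h2 := hμ_add x ((-1:ℝ) • x)
    have h3 : x + (-1:ℝ) • x = 0 := by simp
    rw [h3, hμ0, h1] at h2
    linarith
  by_cases hab : b = a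
  · have h0 : μ (b - a) = 0 := by rw [hab, sub_self, hμ0]
    rw [h0, add_zero, Set.Ioo_self]
    simp
  · set L := μ (b - a) with hLdef
    have hL : 0 < L := lt_of_le_of_ne (hμnn _) (by
      intro h
      exact hab (sub_eq_zero.mp ((hμ_eq _).mp h.symm)))
    have h2 : ∫ s in c..(c+L), G s = L * ∫ t in (0:ℝ)..1, G (L * t + c) := by
      rw [intervalIntegral.integral_comp_mul_add G hL.ne' c]
      rw [smul_eq_mul, mul_zero, zero_add, mul_one, ← mul_assoc,
        mul_inv_cancel₀ hL.ne', one_mul, add_comm c L]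
    have hnull : volume {t : ℝ | a + t • (b - a) = 0} = 0 := by
      apply Set.Subsingleton.measure_zero
      intro t ht t' ht'
      have hv : b - a ≠ 0 := sub_ne_zero.mpr hab
      have h1 : t • (b - a) = t' • (b - a) := by
        have e1 : a + t • (b-a) = 0 := ht
        have e2 : a + t' • (b-a) = 0 := ht'
        exact add_left_cancel (e1.trans e2.symm)
      rcases smul_eq_zero.mp (show (t - t') • (b - a) = 0 by rw [sub_smul, h1, sub_self]) with h | h
      · exact sub_eq_zero.mp h
      · exact absurd h hv
    have h0ae : ∀ᵐ (t:ℝ), a + t • (b - a) ≠ 0 := by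
      rw [MeasureTheory.ae_iff]
      simpa using hnull
    have hae : ∀ᵐ t ∂(volume.restrict (Set.Ioo (0:ℝ) 1)),
        ENNReal.ofReal (G (L * t + c)) ≤ ENNReal.ofReal ((f (a + t • (b - a)))⁻¹) := by
      filter_upwards [ae_restrict_of_ae h0ae, MeasureTheory.ae_restrict_mem measurableSet_Ioo]
        with t hx ht
      apply ENNReal.ofReal_le_ofReal
      have hmu : μ (a + t • (b - a) - z) ≤ L * t + c := by
        have he : a + t • (b-a) - z = (a - z) + t • (b - a) := by abel
        rw [he]
        calc μ ((a - z) + t • (b-a)) ≤ μ (a-z) + μ (t • (b-a)) := hμ_add _ _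
          _ = μ (a-z) + |t| * L := by rw [hμ_smul]
          _ = μ (a-z) + t * L := by rw [abs_of_pos ht.1]
          _ ≤ L * t + c := by nlinarith
      exact le_trans (hGanti hmu) (hkey _ hx)
    calc ∫⁻ s in Set.Ioo c (c+L), ENNReal.ofReal (G s)
        = ENNReal.ofReal (L * ∫ t in (0:ℝ)..1, G (L*t+c)) := by
          rw [← lint_eq G hGc hGnn c (c+L) (by linarith), h2]
      _ = ENNReal.ofReal L * ENNReal.ofReal (∫ t in (0:ℝ)..1, G (L*t+c)) :=
          ENNReal.ofReal_mul hL.le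
      _ = ENNReal.ofReal L * ∫⁻ t in Set.Ioo (0:ℝ) 1, ENNReal.ofReal (G (L*t+c)) := by
          rw [lint_eq (fun t => G (L*t+c))
            (hGc.comp (by continuity)) (fun t => hGnn _) 0 1 zero_le_one]
      _ ≤ ENNReal.ofReal L * ∫⁻ t in Set.Ioo (0:ℝ) 1, ENNReal.ofReal ((f (a + t • (b-a)))⁻¹) :=
          mul_le_mul_right (MeasureTheory.lintegral_mono_ae hae) _
      _ = segLen μ f a b := rfl

section
variable {d : ℕ} (μ f : EuclideanSpace ℝ (Fin d) → ℝ)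
  (hμ_smul : ∀ (c : ℝ) x, μ (c • x) = |c| * μ x)
  (hμ_add : ∀ x y, μ (x + y) ≤ μ x + μ y)
  (hμ_eq : ∀ x, μ x = 0 ↔ x = 0)

include hμ_smul hμ_add hμ_eq

lemma mu_nonneg : ∀ x, 0 ≤ μ x := by
  intro x
  have h1 : μ ((-1:ℝ) • x) = μ x := by rw [hμ_smul]; simp
  have h2 := hμ_add x ((-1:ℝ) • x)
  have h3 : x + (-1:ℝ) • x = 0 := by simp
  rw [h3, (hμ_eq 0).2 rfl, h1] at h2
  linarith

lemma mu_tri (P : ℕ → EuclideanSpace ℝ (Fin d)) (m : ℕ) :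
    μ (P m - P 0) ≤ ∑ i ∈ Finset.range m, μ (P (i+1) - P i) := by
  induction m with
  | zero => simp [(hμ_eq 0).2 rfl]
  | succ m ihm =>
    rw [Finset.sum_range_succ]
    calc μ (P (m+1) - P 0) = μ ((P (m+1) - P m) + (P m - P 0)) := by congr 1; abel
      _ ≤ μ (P (m+1) - P m) + μ (P m - P 0) := hμ_add _ _
      _ ≤ _ := by linarith

lemma chain_lower
    (G : ℝ → ℝ) (hGc : Continuous G) (hGnn : ∀ s, 0 ≤ G s) (hGanti : Antitone G)
    (z : EuclideanSpace ℝ (Fin d))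
    (hkey : ∀ x : EuclideanSpace ℝ (Fin d), x ≠ 0 → G (μ (x - z)) ≤ (f x)⁻¹)
    (P : ℕ → EuclideanSpace ℝ (Fin d)) (hP0 : P 0 = z) (k : ℕ) :
    ∫⁻ s in Set.Ioo 0 (∑ i ∈ Finset.range k, μ (P (i+1) - P i)), ENNReal.ofReal (G s)
      ≤ ∑ i ∈ Finset.range k, segLen μ f (P i) (P (i+1)) := by
  have hμnn := mu_nonneg μ hμ_smul hμ_add hμ_eq
  induction k with
  | zero => simp
  | succ k ih =>
    rw [Finset.sum_range_succ, Finset.sum_range_succ]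
    set S := ∑ i ∈ Finset.range k, μ (P (i+1) - P i) with hS
    have hSnn : 0 ≤ S := Finset.sum_nonneg fun i _ => hμnn _
    have hLnn : 0 ≤ μ (P (k+1) - P k) := hμnn _
    have hsplit : ∫⁻ s in Set.Ioo 0 (S + μ (P (k+1) - P k)), ENNReal.ofReal (G s)
        = (∫⁻ s in Set.Ioo 0 S, ENNReal.ofReal (G s))
          + ∫⁻ s in Set.Ioo S (S + μ (P (k+1)-P k)), ENNReal.ofReal (G s) := by
      rw [setLIntegral_congr (MeasureTheory.Ioo_ae_eq_Ioc (a := (0:ℝ))),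
          setLIntegral_congr (MeasureTheory.Ioo_ae_eq_Ioc (a := (0:ℝ)) (b := S)),
          setLIntegral_congr (MeasureTheory.Ioo_ae_eq_Ioc (a := S)),
          ← Set.Ioc_union_Ioc_eq_Ioc hSnn (by linarith),
          lintegral_union measurableSet_Ioc (Set.Ioc_disjoint_Ioc_of_le le_rfl)]
    rw [hsplit]
    refine add_le_add ih ?_
    refine seg_lower μ f hμ_smul hμ_add hμ_eq G hGc hGnn hGanti z hkey (P k) (P (k+1)) S ?_
    rw [hS, ← hP0]
    exact mu_tri μ hμ_smul hμ_add hμ_eq P k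

lemma path_lower {n : ℕ}
    (G : ℝ → ℝ) (hGc : Continuous G) (hGnn : ∀ s, 0 ≤ G s) (hGanti : Antitone G)
    (z w : EuclideanSpace ℝ (Fin d))
    (hkey : ∀ x : EuclideanSpace ℝ (Fin d), x ≠ 0 → G (μ (x - z)) ≤ (f x)⁻¹)
    (p : Fin (n+1) → EuclideanSpace ℝ (Fin d)) (hp0 : p 0 = z) (hpl : p (Fin.last n) = w) :
    ∫⁻ s in Set.Ioo 0 (μ (w - z)), ENNReal.ofReal (G s)
      ≤ ∑ i : Fin n, segLen μ f (p i.castSucc) (p i.succ) := by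
  set P : ℕ → EuclideanSpace ℝ (Fin d) :=
    fun j => if h : j < n + 1 then p ⟨j, h⟩ else w with hP
  have hP0 : P 0 = z := by
    show (if h : 0 < n + 1 then p ⟨0, h⟩ else w) = z
    rw [dif_pos (Nat.succ_pos n), ← hp0]
    exact congrArg p (Fin.ext (by simp))
  have hPn : P n = w := by
    show (if h : n < n + 1 then p ⟨n, h⟩ else w) = w
    rw [dif_pos (Nat.lt_succ_self n), ← hpl]
    exact congrArg p (Fin.ext rfl)
  have hPc : ∀ i : Fin n, P (i : ℕ) = p i.castSucc := fun i => by
    show (if h : (i:ℕ) < n + 1 then p ⟨(i:ℕ), h⟩ else w) = _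
    rw [dif_pos (by omega : (i:ℕ) < n + 1)]
    exact congrArg p (Fin.ext rfl)
  have hPs : ∀ i : Fin n, P ((i : ℕ)+1) = p i.succ := fun i => by
    show (if h : (i:ℕ)+1 < n + 1 then p ⟨(i:ℕ)+1, h⟩ else w) = _
    rw [dif_pos (by have := i.isLt; omega : (i:ℕ)+1 < n + 1)]
    exact congrArg p (Fin.ext rfl)
  have hsum : ∑ i : Fin n, segLen μ f (p i.castSucc) (p i.succ)
      = ∑ i ∈ Finset.range n, segLen μ f (P i) (P (i+1)) := by
    rw [← Fin.sum_univ_eq_sum_range (fun j => segLen μ f (P j) (P (j+1))) n]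
    apply Finset.sum_congr rfl
    intro i _
    rw [hPc i, hPs i]
  rw [hsum]
  calc ∫⁻ s in Set.Ioo 0 (μ (w - z)), ENNReal.ofReal (G s)
      ≤ ∫⁻ s in Set.Ioo 0 (∑ i ∈ Finset.range n, μ (P (i+1) - P i)), ENNReal.ofReal (G s) := by
        apply lintegral_mono_set
        apply Set.Ioo_subset_Ioo_right
        rw [← hPn, ← hP0]
        exact mu_tri μ hμ_smul hμ_add hμ_eq P n
    _ ≤ _ := chain_lower μ f hμ_smul hμ_add hμ_eq G hGc hGnn hGanti z hkey P hP0 n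
end

theorem stmt4 (d : ℕ) (hd : 0 < d) (α : ℝ)
    (f₀ : EuclideanSpace ℝ (Fin d) → ℝ) (K : NNReal)
    (hLip : LipschitzOnWith K f₀ (sphere (0 : EuclideanSpace ℝ (Fin d)) 1))
    (hpos : ∀ z ∈ sphere (0 : EuclideanSpace ℝ (Fin d)) 1, 0 < f₀ z)
    (f : EuclideanSpace ℝ (Fin d) → ℝ) (hf0 : f 0 = 0)
    (hf : ∀ z : EuclideanSpace ℝ (Fin d), z ≠ 0 → f z = ‖z‖ ^ α * f₀ (‖z‖⁻¹ • z))
    (μ : EuclideanSpace ℝ (Fin d) → ℝ)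
    (hμ_add : ∀ z w, μ (z + w) ≤ μ z + μ w)
    (hμ_smul : ∀ (c : ℝ) z, μ (c • z) = |c| * μ z)
    (hμ_eq : ∀ z, μ z = 0 ↔ z = 0)
    (ρ : ℝ) (hρ : IsLUB {r : ℝ | ∃ z : EuclideanSpace ℝ (Fin d), z ≠ 0 ∧ r = ‖z‖ / μ z} ρ)
    (κ : ℝ) (hκ : IsLUB (f₀ '' sphere (0 : EuclideanSpace ℝ (Fin d)) 1) κ)
    (z w : EuclideanSpace ℝ (Fin d)) (hz : z ≠ 0) (hw : w ≠ 0) :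
    (0 ≤ α → α ≠ 1 →
      ENNReal.ofReal ((‖z‖ ^ (1 - α) - (‖z‖ + ρ * μ (w - z)) ^ (1 - α)) / (ρ * κ * (α - 1)))
        ≤ Dmet μ f z w) ∧
    (α = 1 →
      ENNReal.ofReal ((ρ * κ)⁻¹ * Real.log ((‖z‖ + ρ * μ (w - z)) / ‖z‖))
        ≤ Dmet μ f z w) ∧
    (α < 0 → ρ * μ (w - z) ≤ ‖z‖ →
      ENNReal.ofReal ((‖z‖ ^ (1 - α) - (‖z‖ - ρ * μ (w - z)) ^ (1 - α)) / (ρ * κ * (1 - α)))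
        ≤ Dmet μ f z w) := by
  have hμ0 : μ 0 = 0 := (hμ_eq 0).2 rfl
  have hμnn : ∀ x, 0 ≤ μ x := mu_nonneg μ hμ_smul hμ_add hμ_eq
  have hμpos : ∀ x : EuclideanSpace ℝ (Fin d), x ≠ 0 → 0 < μ x := fun x hx =>
    lt_of_le_of_ne (hμnn x) (fun h => hx ((hμ_eq x).1 h.symm))
  have hznorm : (0:ℝ) < ‖z‖ := norm_pos_iff.mpr hz
  set e : EuclideanSpace ℝ (Fin d) := EuclideanSpace.single ⟨0, hd⟩ (1:ℝ) with he
  have hene : e ≠ 0 := by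
    intro h
    have h2 := congrArg (fun v : EuclideanSpace ℝ (Fin d) => v ⟨0, hd⟩) h
    simp [he, EuclideanSpace.single_apply] at h2
  have hρpos : 0 < ρ :=
    lt_of_lt_of_le (div_pos (norm_pos_iff.mpr hene) (hμpos e hene)) (hρ.1 ⟨e, hene, rfl⟩)
  have hnormle : ∀ x : EuclideanSpace ℝ (Fin d), ‖x‖ ≤ ρ * μ x := by
    intro x
    by_cases hx : x = 0
    · simp [hx, hμ0]
    · have h1 : ‖x‖ / μ x ≤ ρ := hρ.1 ⟨x, hx, rfl⟩
      rw [div_le_iff₀ (hμpos x hx)] at h1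
      linarith
  have hsph : ∀ u : EuclideanSpace ℝ (Fin d), u ∈ sphere (0:EuclideanSpace ℝ (Fin d)) 1 →
      f₀ u ≤ κ := fun u hu => hκ.1 ⟨u, hu, rfl⟩
  have hesph : e ∈ sphere (0:EuclideanSpace ℝ (Fin d)) 1 := by
    rw [mem_sphere_zero_iff_norm, he, EuclideanSpace.norm_single]
    simp
  have hκpos : 0 < κ := lt_of_lt_of_le (hpos e hesph) (hsph e hesph)
  have hfinv : ∀ x : EuclideanSpace ℝ (Fin d), x ≠ 0 → κ⁻¹ * ‖x‖ ^ (-α) ≤ (f x)⁻¹ := by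
    intro x hx
    have hxn : (0:ℝ) < ‖x‖ := norm_pos_iff.mpr hx
    have hu : ‖x‖⁻¹ • x ∈ sphere (0:EuclideanSpace ℝ (Fin d)) 1 := by
      rw [mem_sphere_zero_iff_norm, norm_smul, norm_inv, norm_norm, inv_mul_cancel₀ hxn.ne']
    have hf0pos := hpos _ hu
    rw [hf x hx, mul_inv, ← Real.rpow_neg hxn.le, mul_comm (κ⁻¹)]
    exact mul_le_mul_of_nonneg_left (inv_anti₀ hf0pos (hsph _ hu))
      (Real.rpow_nonneg hxn.le _)
  set M := μ (w - z) with hM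
  have hMnn : (0:ℝ) ≤ M := hμnn _
  have hzM : (0:ℝ) < ‖z‖ + ρ * M := by nlinarith
  have hDbound : ∀ G : ℝ → ℝ, Continuous G → (∀ s, 0 ≤ G s) → Antitone G →
      (∀ x : EuclideanSpace ℝ (Fin d), x ≠ 0 → G (μ (x - z)) ≤ (f x)⁻¹) →
      ∫⁻ s in Set.Ioo 0 M, ENNReal.ofReal (G s) ≤ Dmet μ f z w := by
    intro G hGc hGnn hGanti hkey
    rw [Dmet]
    refine le_iInf fun n => le_iInf fun p => le_iInf fun h0 => le_iInf fun hl => ?_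
    exact path_lower μ f hμ_smul hμ_add hμ_eq G hGc hGnn hGanti z w hkey p h0 hl
  refine ⟨?_, ?_, ?_⟩
  -- CASE 1
  · intro h0α h1α
    set G : ℝ → ℝ := fun s => κ⁻¹ * (‖z‖ + ρ * max s 0) ^ (-α) with hG
    have hbase : ∀ s : ℝ, 0 < ‖z‖ + ρ * max s 0 := fun s =>
      add_pos_of_pos_of_nonneg hznorm (mul_nonneg hρpos.le (le_max_right s 0))
    have hGc : Continuous G := continuous_const.mul
      ((continuous_const.add (continuous_const.mul (continuous_id.max continuous_const))).rpow_const
        fun s => Or.inl (hbase s).ne')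
    have hGnn : ∀ s, 0 ≤ G s := fun s =>
      mul_nonneg (inv_nonneg.2 hκpos.le) (Real.rpow_nonneg (hbase s).le _)
    have hGanti : Antitone G := by
      intro s t hst
      refine mul_le_mul_of_nonneg_left ?_ (inv_nonneg.2 hκpos.le)
      refine Real.rpow_le_rpow_of_nonpos (hbase s) ?_ (neg_nonpos.2 h0α)
      exact add_le_add_right (mul_le_mul_of_nonneg_left (max_le_max hst le_rfl) hρpos.le) _
    have hkey : ∀ x : EuclideanSpace ℝ (Fin d), x ≠ 0 → G (μ (x - z)) ≤ (f x)⁻¹ := by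
      intro x hx
      have hxn : (0:ℝ) < ‖x‖ := norm_pos_iff.mpr hx
      have h1 : ‖x‖ ≤ ‖z‖ + ρ * max (μ (x - z)) 0 := by
        rw [max_eq_left (hμnn _)]
        have h2 : ‖x‖ = ‖z + (x - z)‖ := by congr 1; abel
        rw [h2]
        calc ‖z + (x - z)‖ ≤ ‖z‖ + ‖x - z‖ := norm_add_le _ _
          _ ≤ ‖z‖ + ρ * μ (x - z) := by linarith [hnormle (x - z)]
      calc G (μ (x - z)) ≤ κ⁻¹ * ‖x‖ ^ (-α) :=
            mul_le_mul_of_nonneg_left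
              (Real.rpow_le_rpow_of_nonpos hxn h1 (neg_nonpos.2 h0α))
              (inv_nonneg.2 hκpos.le)
        _ ≤ (f x)⁻¹ := hfinv x hx
    have hint : ∫ s in (0:ℝ)..M, G s
        = (‖z‖ ^ (1-α) - (‖z‖ + ρ * M) ^ (1-α)) / (ρ * κ * (α - 1)) := by
      have heq : Set.EqOn G (fun s => κ⁻¹ * ((fun u => u ^ (-α)) (ρ * s + ‖z‖)))
          (Set.uIcc 0 M) := by
        intro s hs
        rw [Set.uIcc_of_le hMnn] at hs
        show κ⁻¹ * (‖z‖ + ρ * max s 0) ^ (-α) = κ⁻¹ * (ρ * s + ‖z‖) ^ (-α)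
        rw [max_eq_left hs.1, add_comm (‖z‖)]
      rw [intervalIntegral.integral_congr heq, intervalIntegral.integral_const_mul,
        intervalIntegral.integral_comp_mul_add (fun u => u ^ (-α)) hρpos.ne' ‖z‖,
        mul_zero, zero_add]
      rw [integral_rpow (Or.inr ⟨fun h => h1α (neg_inj.mp h), by
        rw [Set.uIcc_of_le (by nlinarith : ‖z‖ ≤ ρ * M + ‖z‖)]
        rintro ⟨h1, -⟩
        linarith⟩)]
      have e1 : -α + 1 = 1 - α := by ring
      rw [e1, smul_eq_mul, add_comm (ρ * M) (‖z‖)]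
      have hα1 : α - 1 ≠ 0 := sub_ne_zero.mpr h1α
      have hα1' : (1:ℝ) - α ≠ 0 := fun h => hα1 (by linarith)
      field_simp
      ring
    calc ENNReal.ofReal ((‖z‖ ^ (1-α) - (‖z‖ + ρ * M) ^ (1-α)) / (ρ * κ * (α - 1)))
        = ENNReal.ofReal (∫ s in (0:ℝ)..M, G s) := by rw [hint]
      _ = ∫⁻ s in Set.Ioo 0 M, ENNReal.ofReal (G s) := lint_eq G hGc hGnn 0 M hMnn
      _ ≤ Dmet μ f z w := hDbound G hGc hGnn hGanti hkey
  -- CASE 2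
  · intro hα1
    subst hα1
    set G : ℝ → ℝ := fun s => κ⁻¹ * (‖z‖ + ρ * max s 0) ^ (-(1:ℝ)) with hG
    have hbase : ∀ s : ℝ, 0 < ‖z‖ + ρ * max s 0 := fun s =>
      add_pos_of_pos_of_nonneg hznorm (mul_nonneg hρpos.le (le_max_right s 0))
    have hGc : Continuous G := continuous_const.mul
      ((continuous_const.add (continuous_const.mul (continuous_id.max continuous_const))).rpow_const
        fun s => Or.inl (hbase s).ne')
    have hGnn : ∀ s, 0 ≤ G s := fun s =>
      mul_nonneg (inv_nonneg.2 hκpos.le) (Real.rpow_nonneg (hbase s).le _)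
    have hGanti : Antitone G := by
      intro s t hst
      refine mul_le_mul_of_nonneg_left ?_ (inv_nonneg.2 hκpos.le)
      refine Real.rpow_le_rpow_of_nonpos (hbase s) ?_ (by norm_num)
      exact add_le_add_right (mul_le_mul_of_nonneg_left (max_le_max hst le_rfl) hρpos.le) _
    have hkey : ∀ x : EuclideanSpace ℝ (Fin d), x ≠ 0 → G (μ (x - z)) ≤ (f x)⁻¹ := by
      intro x hx
      have hxn : (0:ℝ) < ‖x‖ := norm_pos_iff.mpr hx
      have h1 : ‖x‖ ≤ ‖z‖ + ρ * max (μ (x - z)) 0 := by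
        rw [max_eq_left (hμnn _)]
        have h2 : ‖x‖ = ‖z + (x - z)‖ := by congr 1; abel
        rw [h2]
        calc ‖z + (x - z)‖ ≤ ‖z‖ + ‖x - z‖ := norm_add_le _ _
          _ ≤ ‖z‖ + ρ * μ (x - z) := by linarith [hnormle (x - z)]
      calc G (μ (x - z)) ≤ κ⁻¹ * ‖x‖ ^ (-(1:ℝ)) :=
            mul_le_mul_of_nonneg_left
              (Real.rpow_le_rpow_of_nonpos hxn h1 (by norm_num))
              (inv_nonneg.2 hκpos.le)
        _ ≤ (f x)⁻¹ := hfinv x hx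
    have hint : ∫ s in (0:ℝ)..M, G s = (ρ * κ)⁻¹ * Real.log ((‖z‖ + ρ * M) / ‖z‖) := by
      have heq : Set.EqOn G (fun s => κ⁻¹ * ((fun u => u⁻¹) (ρ * s + ‖z‖)))
          (Set.uIcc 0 M) := by
        intro s hs
        rw [Set.uIcc_of_le hMnn] at hs
        show κ⁻¹ * (‖z‖ + ρ * max s 0) ^ (-(1:ℝ)) = κ⁻¹ * (ρ * s + ‖z‖)⁻¹
        rw [max_eq_left hs.1, add_comm (‖z‖), Real.rpow_neg_one]
      rw [intervalIntegral.integral_congr heq, intervalIntegral.integral_const_mul,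
        intervalIntegral.integral_comp_mul_add (fun u => u⁻¹) hρpos.ne' ‖z‖,
        mul_zero, zero_add]
      rw [integral_inv (by
        rw [Set.uIcc_of_le (by nlinarith : ‖z‖ ≤ ρ * M + ‖z‖)]
        rintro ⟨h1, -⟩
        linarith)]
      rw [smul_eq_mul, add_comm (ρ * M) (‖z‖), mul_inv]
      ring
    calc ENNReal.ofReal ((ρ * κ)⁻¹ * Real.log ((‖z‖ + ρ * M) / ‖z‖))
        = ENNReal.ofReal (∫ s in (0:ℝ)..M, G s) := by rw [hint]
      _ = ∫⁻ s in Set.Ioo 0 M, ENNReal.ofReal (G s) := lint_eq G hGc hGnn 0 M hMnn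
      _ ≤ Dmet μ f z w := hDbound G hGc hGnn hGanti hkey
  -- CASE 3
  · intro hα hle
    set G : ℝ → ℝ := fun s => κ⁻¹ * (max (‖z‖ - ρ * s) 0) ^ (-α) with hG
    have hGc : Continuous G := continuous_const.mul
      (((continuous_const.sub (continuous_const.mul continuous_id)).max continuous_const).rpow_const
        fun s => Or.inr (by linarith))
    have hGnn : ∀ s, 0 ≤ G s := fun s =>
      mul_nonneg (inv_nonneg.2 hκpos.le) (Real.rpow_nonneg (le_max_right _ _) _)
    have hGanti : Antitone G := by
      intro s t hst
      refine mul_le_mul_of_nonneg_left ?_ (inv_nonneg.2 hκpos.le)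
      refine Real.rpow_le_rpow (le_max_right _ _) ?_ (by linarith)
      exact max_le_max (by nlinarith) le_rfl
    have hkey : ∀ x : EuclideanSpace ℝ (Fin d), x ≠ 0 → G (μ (x - z)) ≤ (f x)⁻¹ := by
      intro x hx
      have hxn : (0:ℝ) < ‖x‖ := norm_pos_iff.mpr hx
      have h1 : max (‖z‖ - ρ * μ (x - z)) 0 ≤ ‖x‖ := by
        refine max_le ?_ hxn.le
        have h2 : ‖z‖ ≤ ‖x‖ + ‖z - x‖ := by
          calc ‖z‖ = ‖x + (z - x)‖ := by congr 1; abel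
            _ ≤ ‖x‖ + ‖z - x‖ := norm_add_le _ _
        have h3 : ‖z - x‖ = ‖x - z‖ := norm_sub_rev _ _
        linarith [hnormle (x - z)]
      calc G (μ (x - z)) ≤ κ⁻¹ * ‖x‖ ^ (-α) :=
            mul_le_mul_of_nonneg_left
              (Real.rpow_le_rpow (le_max_right _ _) h1 (by linarith))
              (inv_nonneg.2 hκpos.le)
        _ ≤ (f x)⁻¹ := hfinv x hx
    have hint : ∫ s in (0:ℝ)..M, G s
        = (‖z‖ ^ (1-α) - (‖z‖ - ρ * M) ^ (1-α)) / (ρ * κ * (1 - α)) := by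
      have heq : Set.EqOn G (fun s => κ⁻¹ * ((fun u => u ^ (-α)) ((-ρ) * s + ‖z‖)))
          (Set.uIcc 0 M) := by
        intro s hs
        rw [Set.uIcc_of_le hMnn] at hs
        show κ⁻¹ * (max (‖z‖ - ρ * s) 0) ^ (-α) = κ⁻¹ * ((-ρ) * s + ‖z‖) ^ (-α)
        have h4 : (0:ℝ) ≤ ‖z‖ - ρ * s := by nlinarith [hs.2]
        rw [max_eq_left h4]
        ring_nf
      rw [intervalIntegral.integral_congr heq, intervalIntegral.integral_const_mul,
        intervalIntegral.integral_comp_mul_add (fun u => u ^ (-α)) (by linarith : (-ρ) ≠ 0) ‖z‖,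
        mul_zero, zero_add]
      rw [integral_rpow (Or.inl (by linarith))]
      have e1 : -α + 1 = 1 - α := by ring
      have e2 : (-ρ) * M + ‖z‖ = ‖z‖ - ρ * M := by ring
      rw [e1, e2, smul_eq_mul]
      have hα1' : (1:ℝ) - α ≠ 0 := ne_of_gt (by linarith)
      field_simp
      ring
    calc ENNReal.ofReal ((‖z‖ ^ (1-α) - (‖z‖ - ρ * M) ^ (1-α)) / (ρ * κ * (1 - α)))
        = ENNReal.ofReal (∫ s in (0:ℝ)..M, G s) := by rw [hint]
      _ = ∫⁻ s in Set.Ioo 0 M, ENNReal.ofReal (G s) := lint_eq G hGc hGnn 0 M hMnn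
      _ ≤ Dmet μ f z w := hDbound G hGc hGnn hGanti hkey
end

section
/- Suppose α < 1. There exists a constant c > 1, depending only on μ and f, such that for every r > 0: the closed Euclidean ball of radius c^{-1} r^{1/(1−α)} centered at 0 is contained in {z ∈ ℝ^d : D(0,z) ≤ r}, which in turn is contained in the closed Euclidean ball of radius c · r^{1/(1−α)} centered at 0. -/
open MeasureTheory Metric
open scoped ENNReal NNReal Pointwise
open Set

lemma fin_telescope {n : ℕ} (h : Fin (n + 1) → ℝ) :
    ∑ i : Fin n, (h i.succ - h i.castSucc) = h (Fin.last n) - h 0 := by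
  induction n with
  | zero => simp
  | succ n ih =>
    rw [Fin.sum_univ_castSucc]
    have h2 := ih fun j => h j.castSucc
    simp only [Fin.succ_castSucc] at h2 ⊢
    rw [h2, Fin.succ_last]
    simp

lemma ofReal_sum_le {ι : Type*} (s : Finset ι) (f : ι → ℝ) :
    ENNReal.ofReal (∑ i ∈ s, f i) ≤ ∑ i ∈ s, ENNReal.ofReal (f i) := by
  classical
  induction s using Finset.induction with
  | empty => simp
  | insert _ _ h ih =>
    rw [Finset.sum_insert h, Finset.sum_insert h]
    exact (ENNReal.ofReal_add_le).trans (add_le_add le_rfl ih)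

lemma rpow_sub_le (α : ℝ) (hα : α < 1) {x y : ℝ} (hx : 0 ≤ x) (hxy : x ≤ y) :
    y ^ (1 - α) - x ^ (1 - α) ≤
      (2 + (1 - α) * 2 ^ α + (1 - α)) * ((y - x) * y ^ (-α)) := by
  have hβ : 0 < 1 - α := by linarith
  have h2α : (0:ℝ) < 2 ^ α := Real.rpow_pos_of_pos two_pos α
  have hy : 0 ≤ y := hx.trans hxy
  rcases eq_or_lt_of_le hy with hy0 | hy0
  · have hx0 : x = 0 := le_antisymm (hxy.trans hy0.ge) hx
    rw [← hy0, hx0, Real.zero_rpow (ne_of_gt hβ)]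
    simp
  have hypow : y ^ (1 - α) = y * y ^ (-α) := by
    rw [show (1:ℝ) - α = 1 + (-α) by ring, Real.rpow_add hy0, Real.rpow_one]
  have hyα : 0 < y ^ (-α) := Real.rpow_pos_of_pos hy0 (-α)
  rcases eq_or_lt_of_le hx with hx0 | hx0
  · rw [← hx0, Real.zero_rpow (ne_of_gt hβ), sub_zero, sub_zero, hypow]
    nlinarith [mul_pos hy0 hyα, mul_pos hβ h2α, mul_pos (mul_pos hβ h2α) (mul_pos hy0 hyα)]
  rcases eq_or_lt_of_le hxy with rfl | hlt
  · nlinarith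
  rcases le_or_gt y (2 * x) with hcase | hcase
  · obtain ⟨ξ, hξ, hslope⟩ := exists_hasDerivAt_eq_slope (fun s => s ^ (1 - α))
      (fun s => (1 - α) * s ^ (1 - α - 1)) hlt
      (fun s hs => (Real.continuousAt_rpow_const s (1 - α)
        (Or.inl (ne_of_gt (lt_of_lt_of_le hx0 hs.1)))).continuousWithinAt)
      (fun s hs => Real.hasDerivAt_rpow_const (Or.inl (ne_of_gt (hx0.trans hs.1))))
    have hξpos : 0 < ξ := hx0.trans hξ.1
    have heq : y ^ (1 - α) - x ^ (1 - α) = (1 - α) * ξ ^ (-α) * (y - x) := by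
      rw [show (1:ℝ) - α - 1 = -α by ring,
        eq_div_iff (ne_of_gt (sub_pos.2 hlt))] at hslope
      linarith [hslope]
    rcases le_or_gt 0 α with hα0 | hα0
    · have hb1 : ξ ^ (-α) ≤ x ^ (-α) :=
        Real.rpow_le_rpow_of_nonpos hx0 hξ.1.le (by linarith)
      have hb2 : x ^ (-α) ≤ (y / 2) ^ (-α) :=
        Real.rpow_le_rpow_of_nonpos (by linarith) (by linarith) (by linarith)
      have hb3 : (y / 2) ^ (-α) = 2 ^ α * y ^ (-α) := by
        rw [Real.div_rpow hy (by norm_num), Real.rpow_neg (by norm_num : (0:ℝ) ≤ 2),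
          div_eq_mul_inv, inv_inv]
        ring
      have hξb : ξ ^ (-α) ≤ 2 ^ α * y ^ (-α) := by linarith
      nlinarith [heq, mul_le_mul_of_nonneg_right hξb (sub_pos.2 hlt).le,
        mul_pos (sub_pos.2 hlt) hyα, mul_pos hβ h2α, hβ]
    · have hξb : ξ ^ (-α) ≤ y ^ (-α) :=
        Real.rpow_le_rpow hξpos.le hξ.2.le (by linarith)
      nlinarith [heq, mul_le_mul_of_nonneg_right hξb (sub_pos.2 hlt).le,
        mul_pos (sub_pos.2 hlt) hyα, mul_pos hβ h2α, hβ]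
  · have hxβ : 0 ≤ x ^ (1 - α) := Real.rpow_nonneg hx _
    nlinarith [hypow, mul_le_mul_of_nonneg_right (show y ≤ 2*(y-x) by linarith) hyα.le,
      mul_pos (sub_pos.2 hlt) hyα, mul_pos hβ h2α, hβ]

set_option maxHeartbeats 1000000 in
lemma segLen_lower {d : ℕ} {α : ℝ} (hα : α < 1) (μ f : EuclideanSpace ℝ (Fin d) → ℝ)
    {a₀ M : ℝ} (ha₀ : 0 < a₀) (hM : 0 < M)
    (hμ : ∀ z : EuclideanSpace ℝ (Fin d), a₀ * ‖z‖ ≤ μ z)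
    (hfub : ∀ z : EuclideanSpace ℝ (Fin d), z ≠ 0 → f z ≤ M * ‖z‖ ^ α)
    (hfpos : ∀ z : EuclideanSpace ℝ (Fin d), z ≠ 0 → 0 < f z)
    (a b : EuclideanSpace ℝ (Fin d)) :
    ENNReal.ofReal (a₀ * (M⁻¹ * min 1 (2 ^ α)) / (4 * (2 + (1 - α) * 2 ^ α + (1 - α))) *
      (‖b‖ ^ (1 - α) - ‖a‖ ^ (1 - α))) ≤ segLen μ f a b := by
  have hβ : 0 < 1 - α := by linarith
  have h2α : (0:ℝ) < 2 ^ α := Real.rpow_pos_of_pos two_pos α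
  have hq : 0 < M⁻¹ * min 1 (2 ^ α) := mul_pos (inv_pos.2 hM) (lt_min one_pos h2α)
  have hC : (0:ℝ) < 2 + (1 - α) * 2 ^ α + (1 - α) := by nlinarith
  set q := M⁻¹ * min 1 (2 ^ α) with hqdef
  set C := 2 + (1 - α) * 2 ^ α + (1 - α) with hCdef
  set c₂ := a₀ * q / (4 * C) with hc₂def
  have hc₂ : 0 < c₂ := by positivity
  set x := ‖a‖ with hxdef
  set y := ‖b‖ with hydef
  by_cases hd0 : y ^ (1 - α) - x ^ (1 - α) ≤ 0
  · rw [ENNReal.ofReal_of_nonpos (mul_nonpos_of_nonneg_of_nonpos hc₂.le hd0)]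
    exact zero_le
  push_neg at hd0
  have hxy : x < y := by
    by_contra hle
    push_neg at hle
    exact absurd (sub_nonpos.2 (Real.rpow_le_rpow (norm_nonneg b) hle hβ.le)) (not_le.2 hd0)
  have hy0 : 0 < y := lt_of_le_of_lt (norm_nonneg a) hxy
  have hyα : 0 < y ^ (-α) := Real.rpow_pos_of_pos hy0 (-α)
  have key : ∀ t ∈ Set.Ioo (3/4 : ℝ) 1,
      ENNReal.ofReal (q * y ^ (-α)) ≤ ENNReal.ofReal ((f (a + t • (b - a)))⁻¹) := by
    intro t ht
    set w := a + t • (b - a) with hw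
    have hwe : w = (1 - t) • a + t • b := by
      rw [hw, smul_sub, sub_smul, one_smul]
      abel
    have ht0 : (0:ℝ) ≤ t := by linarith [ht.1]
    have ht1 : (0:ℝ) ≤ 1 - t := by linarith [ht.2]
    have hub : ‖w‖ ≤ y := by
      calc ‖w‖ ≤ ‖(1-t) • a‖ + ‖t • b‖ := by rw [hwe]; exact norm_add_le _ _
        _ = (1-t) * x + t * y := by
            rw [norm_smul, norm_smul, Real.norm_of_nonneg ht1, Real.norm_of_nonneg ht0]
        _ ≤ (1-t) * y + t * y := by nlinarith [hxy.le]
        _ = y := by ring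
    have hlb : y / 2 ≤ ‖w‖ := by
      have h1 : ‖t • b‖ ≤ ‖w‖ + ‖(1-t) • a‖ := by
        have he : t • b = w - (1-t) • a := by rw [hwe]; abel
        rw [he]
        exact norm_sub_le _ _
      rw [norm_smul, norm_smul, Real.norm_of_nonneg ht1, Real.norm_of_nonneg ht0] at h1
      have hx0 : (0:ℝ) ≤ x := norm_nonneg a
      nlinarith [ht.1, ht.2, hxy.le]
    have hwne : w ≠ 0 := by
      intro h0
      rw [h0, norm_zero] at hlb
      linarith
    have hwpos : 0 < ‖w‖ := norm_pos_iff.2 hwne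
    have hinv : M⁻¹ * ‖w‖ ^ (-α) ≤ (f w)⁻¹ := by
      rw [Real.rpow_neg hwpos.le]
      calc M⁻¹ * (‖w‖ ^ α)⁻¹ = (M * ‖w‖ ^ α)⁻¹ := (mul_inv _ _).symm
        _ ≤ (f w)⁻¹ := inv_anti₀ (hfpos w hwne) (hfub w hwne)
    have hwα : 0 < ‖w‖ ^ (-α) := Real.rpow_pos_of_pos hwpos (-α)
    have hwbound : min 1 (2 ^ α) * y ^ (-α) ≤ ‖w‖ ^ (-α) := by
      rcases le_or_gt 0 α with hα0 | hα0
      · have h1 : y ^ (-α) ≤ ‖w‖ ^ (-α) :=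
          Real.rpow_le_rpow_of_nonpos hwpos hub (by linarith)
        nlinarith [min_le_left 1 ((2:ℝ) ^ α)]
      · have h2 : (y/2) ^ (-α) ≤ ‖w‖ ^ (-α) :=
          Real.rpow_le_rpow (by positivity) hlb (by linarith)
        have heq2 : (y/2) ^ (-α) = 2 ^ α * y ^ (-α) := by
          rw [Real.div_rpow hy0.le (by norm_num), Real.rpow_neg (by norm_num : (0:ℝ) ≤ 2),
            div_eq_mul_inv, inv_inv]
          ring
        nlinarith [min_le_right 1 ((2:ℝ) ^ α)]
    apply ENNReal.ofReal_le_ofReal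
    calc q * y ^ (-α) = M⁻¹ * (min 1 (2 ^ α) * y ^ (-α)) := by rw [hqdef]; ring
      _ ≤ M⁻¹ * ‖w‖ ^ (-α) := by
          exact mul_le_mul_of_nonneg_left hwbound (by positivity)
      _ ≤ (f w)⁻¹ := hinv
  have hint : ENNReal.ofReal (q * y ^ (-α)) * ENNReal.ofReal (1/4) ≤
      ∫⁻ t in Set.Ioo (0:ℝ) 1, ENNReal.ofReal ((f (a + t • (b - a)))⁻¹) := by
    refine le_trans ?_ (lintegral_mono_set (Set.Ioo_subset_Ioo (by norm_num) le_rfl :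
      Set.Ioo (3/4:ℝ) 1 ⊆ Set.Ioo 0 1))
    have hm := setLIntegral_mono' (μ := volume) measurableSet_Ioo key
    rw [setLIntegral_const, Real.volume_Ioo] at hm
    calc ENNReal.ofReal (q * y ^ (-α)) * ENNReal.ofReal (1/4)
        = ENNReal.ofReal (q * y ^ (-α)) * ENNReal.ofReal ((1:ℝ) - 3/4) := by norm_num
      _ ≤ _ := hm
  have hμab : ENNReal.ofReal (a₀ * (y - x)) ≤ ENNReal.ofReal (μ (b - a)) := by
    apply ENNReal.ofReal_le_ofReal
    calc a₀ * (y - x) ≤ a₀ * ‖b - a‖ := by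
          have h := norm_sub_norm_le b a
          nlinarith
      _ ≤ μ (b - a) := hμ _
  have hfinal : ENNReal.ofReal (a₀ * (y - x)) * (ENNReal.ofReal (q * y ^ (-α)) *
      ENNReal.ofReal (1/4)) ≤ segLen μ f a b := mul_le_mul' hμab hint
  refine le_trans ?_ hfinal
  rw [← ENNReal.ofReal_mul (by positivity : (0:ℝ) ≤ q * y ^ (-α)),
    ← ENNReal.ofReal_mul (mul_nonneg ha₀.le (sub_nonneg.2 hxy.le))]
  apply ENNReal.ofReal_le_ofReal
  have hA := rpow_sub_le α hα (norm_nonneg a) hxy.le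
  rw [← hCdef] at hA
  have h2 : a₀ * q * (y ^ (1-α) - x ^ (1-α)) ≤ a₀ * q * (C * ((y - x) * y ^ (-α))) :=
    mul_le_mul_of_nonneg_left hA (by positivity)
  rw [hc₂def, div_mul_eq_mul_div, div_le_iff₀ (by positivity)]
  calc a₀ * q * (y ^ (1-α) - x ^ (1-α)) ≤ a₀ * q * (C * ((y - x) * y ^ (-α))) := h2
    _ = a₀ * (y - x) * (q * y ^ (-α) * (1/4)) * (4 * C) := by ring

lemma Dmet_lower {d : ℕ} {α : ℝ} (hα : α < 1) (μ f : EuclideanSpace ℝ (Fin d) → ℝ)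
    {c₂ : ℝ}
    (hseg : ∀ a b : EuclideanSpace ℝ (Fin d),
      ENNReal.ofReal (c₂ * (‖b‖ ^ (1 - α) - ‖a‖ ^ (1 - α))) ≤ segLen μ f a b)
    (z : EuclideanSpace ℝ (Fin d)) :
    ENNReal.ofReal (c₂ * ‖z‖ ^ (1 - α)) ≤ Dmet μ f 0 z := by
  unfold Dmet
  refine le_iInf fun n => le_iInf fun p => le_iInf fun h0 => le_iInf fun hl => ?_
  have htel : ∑ i : Fin n, (c₂ * (‖p i.succ‖ ^ (1-α) - ‖p i.castSucc‖ ^ (1-α)))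
      = c₂ * ‖z‖ ^ (1-α) := by
    rw [← Finset.mul_sum, fin_telescope (fun i => ‖p i‖ ^ (1-α)), hl, h0]
    simp [Real.zero_rpow (show (1:ℝ) - α ≠ 0 by linarith)]
  calc ENNReal.ofReal (c₂ * ‖z‖ ^ (1-α))
      = ENNReal.ofReal (∑ i : Fin n, (c₂ * (‖p i.succ‖ ^ (1-α) - ‖p i.castSucc‖ ^ (1-α)))) := by
        rw [htel]
    _ ≤ ∑ i : Fin n, ENNReal.ofReal (c₂ * (‖p i.succ‖ ^ (1-α) - ‖p i.castSucc‖ ^ (1-α))) :=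
        ofReal_sum_le _ _
    _ ≤ ∑ i : Fin n, segLen μ f (p i.castSucc) (p i.succ) :=
        Finset.sum_le_sum fun i _ => hseg _ _

lemma Dmet_upper {d : ℕ} {α : ℝ} (hα : α < 1) (μ f : EuclideanSpace ℝ (Fin d) → ℝ)
    {b₀ m : ℝ} (hb₀ : 0 < b₀) (hm : 0 < m) (hμ0 : μ 0 = 0)
    (hμ : ∀ z : EuclideanSpace ℝ (Fin d), μ z ≤ b₀ * ‖z‖)
    (hflb : ∀ (z : EuclideanSpace ℝ (Fin d)) (t : ℝ), z ≠ 0 → t ∈ Set.Ioo (0:ℝ) 1 →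
      (f (t • z))⁻¹ ≤ m⁻¹ * ‖z‖ ^ (-α) * t ^ (-α))
    (z : EuclideanSpace ℝ (Fin d)) :
    Dmet μ f 0 z ≤ ENNReal.ofReal (b₀ * m⁻¹ / (1 - α) * ‖z‖ ^ (1 - α)) := by
  have hβ : 0 < 1 - α := by linarith
  have hle : Dmet μ f 0 z ≤ segLen μ f 0 z := by
    have h1 : Dmet μ f 0 z ≤ ∑ i : Fin 1, segLen μ f (![0, z] i.castSucc) (![0, z] i.succ) :=
      iInf_le_of_le 1 (iInf_le_of_le ![0, z] (iInf_le_of_le (by simp)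
        (iInf_le_of_le (by simp [Fin.last]) le_rfl)))
    simpa using h1
  refine hle.trans ?_
  unfold segLen
  rcases eq_or_ne z 0 with rfl | hz
  · simp [hμ0]
  have hz0 : 0 < ‖z‖ := norm_pos_iff.2 hz
  have hIβ : ∫⁻ t in Set.Ioo (0:ℝ) 1, ENNReal.ofReal (t ^ (-α)) = ENNReal.ofReal (1/(1-α)) := by
    rw [← ofReal_integral_eq_lintegral_ofReal]
    · congr 1
      rw [← integral_Ioc_eq_integral_Ioo, ← intervalIntegral.integral_of_le zero_le_one,
        integral_rpow (Or.inl (by linarith : (-1:ℝ) < -α)),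
        Real.one_rpow, Real.zero_rpow (show -α + 1 ≠ 0 by intro h; linarith)]
      rw [show -α + 1 = 1 - α by ring]
      simp
    · exact ((intervalIntegrable_iff_integrableOn_Ioc_of_le zero_le_one).1
        (intervalIntegral.intervalIntegrable_rpow' (by linarith))).mono_set Set.Ioo_subset_Ioc_self
    · exact (ae_restrict_iff' measurableSet_Ioo).2 (Filter.Eventually.of_forall
        fun t ht => Real.rpow_nonneg ht.1.le _)
  have hmono : ∫⁻ t in Set.Ioo (0:ℝ) 1, ENNReal.ofReal ((f (0 + t • (z - 0)))⁻¹)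
      ≤ ∫⁻ t in Set.Ioo (0:ℝ) 1, ENNReal.ofReal (m⁻¹ * ‖z‖ ^ (-α) * t ^ (-α)) := by
    refine setLIntegral_mono' (μ := volume) measurableSet_Ioo fun t ht => ?_
    apply ENNReal.ofReal_le_ofReal
    simpa using hflb z t hz ht
  have hconst : ∫⁻ t in Set.Ioo (0:ℝ) 1, ENNReal.ofReal (m⁻¹ * ‖z‖ ^ (-α) * t ^ (-α))
      = ENNReal.ofReal (m⁻¹ * ‖z‖ ^ (-α)) * ENNReal.ofReal (1/(1-α)) := by
    simp_rw [ENNReal.ofReal_mul (by positivity : (0:ℝ) ≤ m⁻¹ * ‖z‖ ^ (-α))]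
    rw [lintegral_const_mul' _ _ ENNReal.ofReal_ne_top, hIβ]
  calc ENNReal.ofReal (μ (z - 0)) * ∫⁻ t in Set.Ioo (0:ℝ) 1,
        ENNReal.ofReal ((f (0 + t • (z - 0)))⁻¹)
      ≤ ENNReal.ofReal (b₀ * ‖z‖) *
        (ENNReal.ofReal (m⁻¹ * ‖z‖ ^ (-α)) * ENNReal.ofReal (1/(1-α))) := by
        refine mul_le_mul' (ENNReal.ofReal_le_ofReal ?_) (hmono.trans_eq hconst)
        simpa using hμ (z - 0)
    _ = ENNReal.ofReal (b₀ * m⁻¹ / (1 - α) * ‖z‖ ^ (1 - α)) := by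
        rw [← ENNReal.ofReal_mul (by positivity : (0:ℝ) ≤ m⁻¹ * ‖z‖ ^ (-α)),
          ← ENNReal.ofReal_mul (by positivity : (0:ℝ) ≤ b₀ * ‖z‖)]
        congr 1
        have hzz : ‖z‖ * ‖z‖ ^ (-α) = ‖z‖ ^ (1-α) := by
          rw [show (1:ℝ) - α = 1 + (-α) by ring, Real.rpow_add hz0, Real.rpow_one]
        rw [← hzz]
        ring

set_option maxHeartbeats 1000000 in
theorem stmt5 (d : ℕ) (hd : 0 < d) (α : ℝ) (hα : α < 1)
    (f₀ : EuclideanSpace ℝ (Fin d) → ℝ) (K : NNReal)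
    (hLip : LipschitzOnWith K f₀ (sphere (0 : EuclideanSpace ℝ (Fin d)) 1))
    (hpos : ∀ z ∈ sphere (0 : EuclideanSpace ℝ (Fin d)) 1, 0 < f₀ z)
    (f : EuclideanSpace ℝ (Fin d) → ℝ) (hf0 : f 0 = 0)
    (hf : ∀ z : EuclideanSpace ℝ (Fin d), z ≠ 0 → f z = ‖z‖ ^ α * f₀ (‖z‖⁻¹ • z))
    (μ : EuclideanSpace ℝ (Fin d) → ℝ)
    (hμ_add : ∀ z w, μ (z + w) ≤ μ z + μ w)
    (hμ_smul : ∀ (c : ℝ) z, μ (c • z) = |c| * μ z)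
    (hμ_eq : ∀ z, μ z = 0 ↔ z = 0) :
    ∃ c : ℝ, 1 < c ∧ ∀ r : ℝ, 0 < r →
      closedBall (0 : EuclideanSpace ℝ (Fin d)) (c⁻¹ * r ^ ((1 : ℝ) / (1 - α))) ⊆
        {z : EuclideanSpace ℝ (Fin d) | Dmet μ f 0 z ≤ ENNReal.ofReal r} ∧
      {z : EuclideanSpace ℝ (Fin d) | Dmet μ f 0 z ≤ ENNReal.ofReal r} ⊆
        closedBall (0 : EuclideanSpace ℝ (Fin d)) (c * r ^ ((1 : ℝ) / (1 - α))) := by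
  classical
  have hβ : 0 < 1 - α := by linarith
  have h2α : (0:ℝ) < 2 ^ α := Real.rpow_pos_of_pos two_pos α
  -- basic properties of μ
  have hμ0 : μ 0 = 0 := (hμ_eq 0).2 rfl
  have hμneg : ∀ z, μ (-z) = μ z := by
    intro z
    rw [show -z = (-1:ℝ) • z by simp, hμ_smul]
    simp
  have hμnonneg : ∀ z, 0 ≤ μ z := by
    intro z
    have h1 := hμ_add z (-z)
    rw [add_neg_cancel, hμ0, hμneg] at h1
    linarith
  -- upper bound for μ
  have hsub : ∀ (s : Finset (Fin d)) (v : Fin d → EuclideanSpace ℝ (Fin d)),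
      μ (∑ i ∈ s, v i) ≤ ∑ i ∈ s, μ (v i) := by
    intro s v
    induction s using Finset.cons_induction with
    | empty => simp [hμ0]
    | cons j s hj ih =>
      rw [Finset.sum_cons, Finset.sum_cons]
      exact (hμ_add _ _).trans (add_le_add le_rfl ih)
  have hcoord : ∀ (z : EuclideanSpace ℝ (Fin d)) (i : Fin d), |z i| ≤ ‖z‖ := by
    intro z i
    calc |z i| = Real.sqrt (‖z i‖ ^ 2) := by
          rw [Real.sqrt_sq (norm_nonneg _), Real.norm_eq_abs]
      _ ≤ Real.sqrt (∑ j, ‖z j‖ ^ 2) := Real.sqrt_le_sqrt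
          (Finset.single_le_sum (fun j _ => sq_nonneg ‖z j‖) (Finset.mem_univ i))
      _ = ‖z‖ := (EuclideanSpace.norm_eq z).symm
  set b₀ : ℝ := (∑ i : Fin d, μ (EuclideanSpace.single i 1)) + 1 with hb₀def
  have hb₀pos : 0 < b₀ := by
    have h1 : 0 ≤ ∑ i : Fin d, μ (EuclideanSpace.single i 1) :=
      Finset.sum_nonneg fun i _ => hμnonneg _
    rw [hb₀def]; linarith
  have hμub : ∀ z, μ z ≤ b₀ * ‖z‖ := by
    intro z
    have hrepr : z = ∑ i : Fin d, z i • EuclideanSpace.single i (1:ℝ) := by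
      have h := (EuclideanSpace.basisFun (Fin d) ℝ).sum_repr z
      simp only [EuclideanSpace.basisFun_apply, EuclideanSpace.basisFun_repr] at h
      exact h.symm
    have hz0 : 0 ≤ ‖z‖ := norm_nonneg z
    calc μ z = μ (∑ i : Fin d, z i • EuclideanSpace.single i (1:ℝ)) := by rw [← hrepr]
      _ ≤ ∑ i : Fin d, μ (z i • EuclideanSpace.single i (1:ℝ)) := hsub _ _
      _ = ∑ i : Fin d, |z i| * μ (EuclideanSpace.single i (1:ℝ)) := by simp_rw [hμ_smul]
      _ ≤ ∑ i : Fin d, ‖z‖ * μ (EuclideanSpace.single i (1:ℝ)) :=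
          Finset.sum_le_sum fun i _ => mul_le_mul_of_nonneg_right (hcoord z i) (hμnonneg _)
      _ = (∑ i : Fin d, μ (EuclideanSpace.single i (1:ℝ))) * ‖z‖ := by
          rw [Finset.sum_mul]
          exact Finset.sum_congr rfl fun i _ => mul_comm _ _
      _ ≤ b₀ * ‖z‖ := by
          rw [hb₀def]
          nlinarith
  -- μ is continuous
  have hμcont : Continuous μ := by
    have hlip : LipschitzWith (Real.toNNReal b₀) μ := by
      refine LipschitzWith.of_dist_le_mul fun z w => ?_
      rw [Real.dist_eq]
      have hsz : μ (z - w) ≤ b₀ * ‖z - w‖ := hμub _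
      have h1 : μ z - μ w ≤ μ (z - w) := by
        have h := hμ_add (z - w) w
        rw [sub_add_cancel] at h
        linarith
      have h2 : μ w - μ z ≤ μ (z - w) := by
        have h := hμ_add (w - z) z
        rw [sub_add_cancel] at h
        have h3 : μ (w - z) = μ (z - w) := by rw [show w - z = -(z - w) by abel, hμneg]
        linarith
      have h4 : |μ z - μ w| ≤ μ (z - w) := abs_le.2 ⟨by linarith, h1⟩
      calc |μ z - μ w| ≤ μ (z - w) := h4
        _ ≤ b₀ * ‖z - w‖ := hsz
        _ = Real.toNNReal b₀ * dist z w := by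
            rw [Real.coe_toNNReal _ hb₀pos.le, dist_eq_norm]
    exact hlip.continuous
  -- sphere is nonempty
  have hz₀mem : EuclideanSpace.single (⟨0, hd⟩ : Fin d) (1:ℝ) ∈
      sphere (0 : EuclideanSpace ℝ (Fin d)) 1 := by
    rw [mem_sphere_zero_iff_norm, EuclideanSpace.norm_single]
    norm_num
  -- lower bound for μ
  obtain ⟨u, hu, humin⟩ := (isCompact_sphere (0 : EuclideanSpace ℝ (Fin d)) 1).exists_isMinOn
    ⟨_, hz₀mem⟩ hμcont.continuousOn
  set a₀ := μ u with ha₀def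
  have hune : u ≠ 0 := by
    intro h
    rw [mem_sphere_zero_iff_norm, h, norm_zero] at hu
    norm_num at hu
  have ha₀pos : 0 < a₀ := by
    rcases lt_or_eq_of_le (hμnonneg u) with h | h
    · exact h
    · exact absurd ((hμ_eq u).1 h.symm) hune
  have hμlb : ∀ z, a₀ * ‖z‖ ≤ μ z := by
    intro z
    rcases eq_or_ne z 0 with rfl | hz
    · simp [hμ0]
    · have hzpos : 0 < ‖z‖ := norm_pos_iff.2 hz
      have hunit : ‖z‖⁻¹ • z ∈ sphere (0 : EuclideanSpace ℝ (Fin d)) 1 := by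
        rw [mem_sphere_zero_iff_norm]
        exact norm_smul_inv_norm hz
      have h1 : a₀ ≤ μ (‖z‖⁻¹ • z) := humin hunit
      rw [hμ_smul, abs_of_pos (by positivity)] at h1
      calc a₀ * ‖z‖ ≤ ‖z‖⁻¹ * μ z * ‖z‖ := mul_le_mul_of_nonneg_right h1 hzpos.le
        _ = μ z := by field_simp
  -- bounds for f₀ on the sphere
  obtain ⟨vm, hvm, hvmin⟩ := (isCompact_sphere (0 : EuclideanSpace ℝ (Fin d)) 1).exists_isMinOn
    ⟨_, hz₀mem⟩ hLip.continuousOn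
  obtain ⟨vM, hvM, hvmax⟩ := (isCompact_sphere (0 : EuclideanSpace ℝ (Fin d)) 1).exists_isMaxOn
    ⟨_, hz₀mem⟩ hLip.continuousOn
  set m := f₀ vm with hmdef
  set M := f₀ vM with hMdef
  have hm : 0 < m := hpos vm hvm
  have hM : 0 < M := hpos vM hvM
  have hunit_mem : ∀ z : EuclideanSpace ℝ (Fin d), z ≠ 0 →
      ‖z‖⁻¹ • z ∈ sphere (0 : EuclideanSpace ℝ (Fin d)) 1 := by
    intro z hz
    rw [mem_sphere_zero_iff_norm]
    exact norm_smul_inv_norm hz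
  have hfub : ∀ z : EuclideanSpace ℝ (Fin d), z ≠ 0 → f z ≤ M * ‖z‖ ^ α := by
    intro z hz
    have hzpos : 0 < ‖z‖ := norm_pos_iff.2 hz
    have h1 : f₀ (‖z‖⁻¹ • z) ≤ M := hvmax (hunit_mem z hz)
    rw [hf z hz]
    nlinarith [Real.rpow_pos_of_pos hzpos α]
  have hfpos : ∀ z : EuclideanSpace ℝ (Fin d), z ≠ 0 → 0 < f z := by
    intro z hz
    have hzpos : 0 < ‖z‖ := norm_pos_iff.2 hz
    have h1 : m ≤ f₀ (‖z‖⁻¹ • z) := hvmin (hunit_mem z hz)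
    rw [hf z hz]
    nlinarith [Real.rpow_pos_of_pos hzpos α]
  have hflb : ∀ (z : EuclideanSpace ℝ (Fin d)) (t : ℝ), z ≠ 0 → t ∈ Set.Ioo (0:ℝ) 1 →
      (f (t • z))⁻¹ ≤ m⁻¹ * ‖z‖ ^ (-α) * t ^ (-α) := by
    intro z t hz ht
    have htpos : 0 < t := ht.1
    have hzpos : 0 < ‖z‖ := norm_pos_iff.2 hz
    have htz : t • z ≠ 0 := smul_ne_zero (ne_of_gt htpos) hz
    have hnorm : ‖t • z‖ = t * ‖z‖ := by
      rw [norm_smul, Real.norm_of_nonneg htpos.le]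
    have hunit : (t * ‖z‖)⁻¹ • (t • z) = ‖z‖⁻¹ • z := by
      rw [smul_smul]
      congr 1
      field_simp
    have hfeq : f (t • z) = (t * ‖z‖) ^ α * f₀ (‖z‖⁻¹ • z) := by
      rw [hf _ htz, hnorm, hunit]
    have h1 : m ≤ f₀ (‖z‖⁻¹ • z) := hvmin (hunit_mem z hz)
    have htzpos : (0:ℝ) < t * ‖z‖ := by positivity
    have hfge : m * (t * ‖z‖) ^ α ≤ f (t • z) := by
      rw [hfeq]
      nlinarith [Real.rpow_pos_of_pos htzpos α]
    have h2 : (f (t • z))⁻¹ ≤ (m * (t * ‖z‖) ^ α)⁻¹ :=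
      inv_anti₀ (by positivity) hfge
    refine h2.trans_eq ?_
    rw [Real.mul_rpow htpos.le hzpos.le, Real.rpow_neg hzpos.le, Real.rpow_neg htpos.le,
      mul_inv, mul_inv]
    ring
  -- constants
  set C₁ : ℝ := b₀ * m⁻¹ / (1 - α) with hC₁def
  set C₂ : ℝ := a₀ * (M⁻¹ * min 1 (2 ^ α)) / (4 * (2 + (1 - α) * 2 ^ α + (1 - α))) with hC₂def
  have hC₁pos : 0 < C₁ := by positivity
  have hC₂pos : 0 < C₂ := by
    have h1 : 0 < M⁻¹ * min 1 (2 ^ α) := mul_pos (inv_pos.2 hM) (lt_min one_pos h2α)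
    have h2 : (0:ℝ) < 2 + (1 - α) * 2 ^ α + (1 - α) := by nlinarith
    rw [hC₂def]
    positivity
  have hDub : ∀ z, Dmet μ f 0 z ≤ ENNReal.ofReal (C₁ * ‖z‖ ^ (1 - α)) := by
    intro z
    have := Dmet_upper hα μ f hb₀pos hm hμ0 hμub hflb z
    rwa [hC₁def]
  have hDlb : ∀ z, ENNReal.ofReal (C₂ * ‖z‖ ^ (1 - α)) ≤ Dmet μ f 0 z := by
    intro z
    exact Dmet_lower hα μ f (fun a b => segLen_lower hα μ f ha₀pos hM hμlb hfub hfpos a b) z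
  -- choose the constant
  set K₀ : ℝ := max 2 (max C₁ C₂⁻¹) with hK₀def
  have hK₀2 : (2:ℝ) ≤ K₀ := le_max_left _ _
  have hK₀pos : (0:ℝ) < K₀ := by linarith
  refine ⟨K₀ ^ ((1:ℝ)/(1-α)), ?_, ?_⟩
  · rw [Real.one_lt_rpow_iff_of_pos hK₀pos]
    exact Or.inl ⟨by linarith, by positivity⟩
  · intro r hr
    set c := K₀ ^ ((1:ℝ)/(1-α)) with hcdef
    have hcpos : 0 < c := Real.rpow_pos_of_pos hK₀pos _
    set R := r ^ ((1:ℝ)/(1-α)) with hRdef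
    have hRpos : 0 < R := Real.rpow_pos_of_pos hr _
    have hRβ : R ^ (1-α) = r := by
      rw [hRdef, ← Real.rpow_mul hr.le, one_div, inv_mul_cancel₀ (ne_of_gt hβ), Real.rpow_one]
    have hcβ : c ^ (1-α) = K₀ := by
      rw [hcdef, ← Real.rpow_mul hK₀pos.le, one_div, inv_mul_cancel₀ (ne_of_gt hβ),
        Real.rpow_one]
    constructor
    · intro z hz
      rw [mem_closedBall_zero_iff] at hz
      simp only [Set.mem_setOf_eq]
      refine le_trans (hDub z) ?_
      rw [ENNReal.ofReal_le_ofReal_iff hr.le]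
      have h1 : ‖z‖ ^ (1-α) ≤ (c⁻¹ * R) ^ (1-α) := Real.rpow_le_rpow (norm_nonneg z) hz hβ.le
      have h2 : (c⁻¹ * R) ^ (1-α) = K₀⁻¹ * r := by
        rw [Real.mul_rpow (by positivity) hRpos.le, Real.inv_rpow hcpos.le, hcβ, hRβ]
      rw [h2] at h1
      have hC₁K : C₁ ≤ K₀ := le_trans (le_max_left _ _) (le_max_right _ _)
      have h3 : C₁ * K₀⁻¹ ≤ 1 := by
        rw [← div_eq_mul_inv, div_le_one hK₀pos]
        exact hC₁K
      have h4 : 0 ≤ ‖z‖ ^ (1-α) := Real.rpow_nonneg (norm_nonneg z) _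
      nlinarith [mul_le_mul_of_nonneg_left h1 hC₁pos.le]
    · intro z hz
      simp only [Set.mem_setOf_eq] at hz
      rw [mem_closedBall_zero_iff]
      have h1 := le_trans (hDlb z) hz
      have h2 : C₂ * ‖z‖ ^ (1-α) ≤ r := (ENNReal.ofReal_le_ofReal_iff hr.le).1 h1
      have h3 : ‖z‖ ^ (1-α) ≤ C₂⁻¹ * r := by
        have h := mul_le_mul_of_nonneg_left h2 (inv_pos.2 hC₂pos).le
        rwa [← mul_assoc, inv_mul_cancel₀ (ne_of_gt hC₂pos), one_mul] at h
      have h5 : (‖z‖ ^ (1-α)) ^ ((1:ℝ)/(1-α)) = ‖z‖ := by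
        rw [← Real.rpow_mul (norm_nonneg z), mul_one_div, div_self (ne_of_gt hβ),
          Real.rpow_one]
      have h4 : ‖z‖ ≤ (C₂⁻¹ * r) ^ ((1:ℝ)/(1-α)) := by
        rw [← h5]
        exact Real.rpow_le_rpow (Real.rpow_nonneg (norm_nonneg z) _) h3 (by positivity)
      have h6 : (C₂⁻¹ * r) ^ ((1:ℝ)/(1-α)) = (C₂⁻¹) ^ ((1:ℝ)/(1-α)) * R := by
        rw [Real.mul_rpow (by positivity) hr.le, hRdef]
      have h7 : (C₂⁻¹ : ℝ) ^ ((1:ℝ)/(1-α)) ≤ c := by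
        rw [hcdef]
        exact Real.rpow_le_rpow (by positivity)
          (le_trans (le_max_right C₁ _) (le_max_right _ _)) (by positivity)
      calc ‖z‖ ≤ (C₂⁻¹ * r) ^ ((1:ℝ)/(1-α)) := h4
        _ = (C₂⁻¹) ^ ((1:ℝ)/(1-α)) * R := h6
        _ ≤ c * R := mul_le_mul_of_nonneg_right h7 hRpos.le
end

section
/- For every q > 1, the Euclidean distance from the set Q_s to the set q·(∂Q_s ∖ (P_x ∪ P_{−x})) is at least ρ̄ · s · (q−1). -/
open MeasureTheory Metric
open scoped ENNReal NNReal Pointwise RealInnerProductSpace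

private lemma pythagoras_aux {E : Type*} [NormedAddCommGroup E] [InnerProductSpace ℝ E]
    (v w : E) (h : ⟪v, w⟫ = 0) : ‖v‖ ≤ ‖v + w‖ := by
  have h2 := norm_add_sq_real v w
  rw [h] at h2
  nlinarith [norm_nonneg (v + w), norm_nonneg v, sq_nonneg ‖w‖]

theorem stmt9 (d : ℕ) (hd : 0 < d)
    (μ : EuclideanSpace ℝ (Fin d) → ℝ)
    (hμ_add : ∀ z w, μ (z + w) ≤ μ z + μ w)
    (hμ_smul : ∀ (c : ℝ) z, μ (c • z) = |c| * μ z)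
    (hμ_eq : ∀ z, μ z = 0 ↔ z = 0)
    (ρ : ℝ) (hρ : IsLUB {r : ℝ | ∃ z : EuclideanSpace ℝ (Fin d), z ≠ 0 ∧ r = ‖z‖ / μ z} ρ)
    (x : EuclideanSpace ℝ (Fin d)) (hx1 : μ x = 1) (hx2 : ‖x‖ = ρ)
    (s : ℝ) (hs : 1 < s)
    (Q : Set (EuclideanSpace ℝ (Fin d)))
    (hQplane : ∀ z ∈ Q, ⟪z, x⟫ = 0)
    (hQcomp : IsCompact Q) (hQconv : Convex ℝ Q)
    (hQsymm : ∀ z ∈ Q, -z ∈ Q)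
    (hQball : ∀ z : EuclideanSpace ℝ (Fin d), ‖z‖ ≤ ρ → ⟪z, x⟫ = 0 → z ∈ Q)
    (Qs : Set (EuclideanSpace ℝ (Fin d)))
    (hQs : Qs = {y | ∃ z ∈ Q, ∃ t ∈ Set.Icc (-1 : ℝ) 1, y = s • z + t • x})
    (Px Pnx : Set (EuclideanSpace ℝ (Fin d)))
    (hPx : Px = {z | ⟪z - x, x⟫ = 0}) (hPnx : Pnx = {z | ⟪z + x, x⟫ = 0}) :
    ∀ q : ℝ, 1 < q → ∀ a ∈ Qs, ∀ b ∈ q • (frontier Qs \ (Px ∪ Pnx)),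
      ρ * s * (q - 1) ≤ dist a b := by
  intro q hq a ha b hb
  have hx0 : x ≠ 0 := by
    intro h
    have h0 : μ (0 : EuclideanSpace ℝ (Fin d)) = 0 := (hμ_eq 0).mpr rfl
    rw [h, h0] at hx1; norm_num at hx1
  have hρpos : (0:ℝ) < ρ := hx2 ▸ norm_pos_iff.mpr hx0
  have hs0 : (0:ℝ) < s := lt_trans one_pos hs
  have hq0 : (0:ℝ) < q := lt_trans one_pos hq
  have hq1 : (0:ℝ) < q - 1 := by linarith
  have hsne : s ≠ 0 := ne_of_gt hs0
  have hqne : q ≠ 0 := ne_of_gt hq0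
  have hq1ne : q - 1 ≠ 0 := ne_of_gt hq1
  obtain ⟨y, hy, rfl⟩ := hb
  have hyF : y ∈ frontier Qs := hy.1
  have hyP : y ∉ Px ∪ Pnx := hy.2
  -- Qs is compact, hence closed
  have him : Qs = (fun p : EuclideanSpace ℝ (Fin d) × ℝ => s • p.1 + p.2 • x) ''
      (Q ×ˢ Set.Icc (-1:ℝ) 1) := by
    rw [hQs]; ext w
    constructor
    · rintro ⟨z0, hz0, t0, ht0, rfl⟩; exact ⟨(z0, t0), ⟨hz0, ht0⟩, rfl⟩
    · rintro ⟨⟨z0, t0⟩, ⟨hz0, ht0⟩, rfl⟩; exact ⟨z0, hz0, t0, ht0, rfl⟩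
  have hQsc : IsCompact Qs := by
    rw [him]
    exact (hQcomp.prod isCompact_Icc).image
      ((continuous_fst.const_smul s).add (continuous_snd.smul continuous_const))
  have hyQs : y ∈ Qs := hQsc.isClosed.frontier_subset hyF
  rw [hQs] at hyQs ha
  obtain ⟨z', hz', t', ht', hyeq⟩ := hyQs
  obtain ⟨z, hz, t, ht, rfl⟩ := ha
  have hzx := hQplane z hz
  have hz'x := hQplane z' hz'
  have hxx : ⟪x, x⟫ = ρ * ρ := by
    rw [real_inner_self_eq_norm_mul_norm, hx2]
  -- t' ≠ ±1
  have ht'1 : t' ≠ 1 := by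
    intro h
    apply hyP; left; rw [hPx]
    show ⟪y - x, x⟫ = 0
    rw [hyeq, h, inner_sub_left, inner_add_left, real_inner_smul_left,
      real_inner_smul_left, hz'x]
    ring
  have ht'n1 : t' ≠ -1 := by
    intro h
    apply hyP; right; rw [hPnx]
    show ⟪y + x, x⟫ = 0
    rw [hyeq, h, inner_add_left, inner_add_left, real_inner_smul_left,
      real_inner_smul_left, hz'x]
    ring
  have ht'abs : |t'| < 1 :=
    abs_lt.mpr ⟨lt_of_le_of_ne ht'.1 (Ne.symm ht'n1), lt_of_le_of_ne ht'.2 ht'1⟩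
  -- Key estimate
  have hkey : ρ * (q - 1) ≤ ‖z - q • z'‖ := by
    by_contra hcon
    push_neg at hcon
    set δ : ℝ := ρ * (q - 1) - ‖z - q • z'‖ with hδ
    have hδpos : 0 < δ := by rw [hδ]; linarith
    set ε : ℝ := min (δ * s / q) ((1 - |t'|) * ρ) with hε
    have hεpos : 0 < ε := by
      apply lt_min
      · positivity
      · have : 0 < 1 - |t'| := by linarith
        positivity
    have hball : Metric.ball y ε ⊆ Qs := by
      intro y' hy'
      rw [hQs]
      set e := y' - y with he
      have hee : ‖e‖ < ε := by
        rw [he]; exact mem_ball_iff_norm.mp hy'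
      set c : ℝ := ⟪e, x⟫ / (ρ * ρ) with hc
      set ep := e - c • x with hep
      have hepx : ⟪ep, x⟫ = 0 := by
        rw [hep, inner_sub_left, real_inner_smul_left, hxx, hc]
        field_simp; ring
      have hepe : e = ep + c • x := by rw [hep]; abel
      have hepn : ‖ep‖ ≤ ‖e‖ := by
        have h0 : ⟪ep, c • x⟫ = 0 := by rw [real_inner_smul_right, hepx]; ring
        calc ‖ep‖ ≤ ‖ep + c • x‖ := pythagoras_aux _ _ h0
          _ = ‖e‖ := by rw [← hepe]
      have hcabs : |c| ≤ ‖e‖ / ρ := by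
        rw [hc, abs_div, abs_of_pos (by positivity : (0:ℝ) < ρ * ρ)]
        have h1 : |⟪e, x⟫| ≤ ‖e‖ * ρ := by
          have := abs_real_inner_le_norm e x
          rwa [hx2] at this
        rw [show ‖e‖ / ρ = (‖e‖ * ρ) / (ρ * ρ) by field_simp]
        gcongr
      set u' := (1 / (q - 1)) • (q • z' - z) + (q / ((q - 1) * s)) • ep with hu'
      have hu'x : ⟪u', x⟫ = 0 := by
        rw [hu', inner_add_left, real_inner_smul_left, real_inner_smul_left,
          inner_sub_left, real_inner_smul_left, hzx, hz'x, hepx]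
        ring
      have hepb : ‖ep‖ ≤ δ * s / q :=
        le_trans hepn (le_trans hee.le (min_le_left _ _))
      have hu'n : ‖u'‖ ≤ ρ := by
        have h1 : ‖(1 / (q - 1)) • (q • z' - z)‖ = (1 / (q - 1)) * ‖z - q • z'‖ := by
          rw [norm_smul, norm_sub_rev, Real.norm_eq_abs, abs_of_pos (by positivity : (0:ℝ) < 1 / (q - 1))]
        have h2 : ‖(q / ((q - 1) * s)) • ep‖ ≤ (q / ((q - 1) * s)) * (δ * s / q) := by
          rw [norm_smul, Real.norm_eq_abs, abs_of_pos (by positivity : (0:ℝ) < q / ((q - 1) * s))]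
          gcongr
        calc ‖u'‖ ≤ ‖(1 / (q - 1)) • (q • z' - z)‖ + ‖(q / ((q - 1) * s)) • ep‖ :=
              norm_add_le _ _
          _ ≤ (1 / (q - 1)) * ‖z - q • z'‖ + (q / ((q - 1) * s)) * (δ * s / q) := by
              rw [h1]; linarith
          _ = ρ := by rw [hδ]; field_simp; ring
      have hu'Q : u' ∈ Q := hQball u' hu'n hu'x
      set z'' := z' + (1 / s) • ep with hz''
      have hz''Q : z'' ∈ Q := by
        have hconv := hQconv hz hu'Q (le_of_lt (by positivity : (0:ℝ) < 1 / q))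
          (le_of_lt (by positivity : (0:ℝ) < (q - 1) / q)) (by field_simp; ring)
        have heq : (1 / q) • z + ((q - 1) / q) • u' = z'' := by
          rw [hu', hz'']
          match_scalars <;> field_simp <;> ring
        rwa [heq] at hconv
      set t'' := t' + c with ht''
      have ht''abs : |t''| ≤ 1 := by
        have h1 : |c| ≤ 1 - |t'| := by
          calc |c| ≤ ‖e‖ / ρ := hcabs
            _ ≤ ((1 - |t'|) * ρ) / ρ := by
                gcongr
                exact le_trans hee.le (min_le_right _ _)
            _ = 1 - |t'| := by field_simp
        calc |t''| ≤ |t'| + |c| := abs_add_le _ _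
          _ ≤ |t'| + (1 - |t'|) := by linarith
          _ = 1 := by ring
      refine ⟨z'', hz''Q, t'', ⟨(abs_le.mp ht''abs).1, (abs_le.mp ht''abs).2⟩, ?_⟩
      have hy'e : y' = y + e := by rw [he]; abel
      rw [hy'e, hyeq, hepe, hz'', ht'']
      match_scalars <;> field_simp <;> ring
    have hyint : y ∈ interior Qs :=
      mem_interior.mpr ⟨Metric.ball y ε, hball, isOpen_ball, mem_ball_self hεpos⟩
    exact hyF.2 hyint
  -- conclude
  rw [dist_eq_norm, hyeq]
  have hsplit : (s • z + t • x) - q • (s • z' + t' • x) =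
      (s • (z - q • z')) + (t - q * t') • x := by module
  rw [hsplit]
  have h1 : ⟪s • (z - q • z'), (t - q * t') • x⟫ = 0 := by
    rw [real_inner_smul_left, real_inner_smul_right, inner_sub_left,
      real_inner_smul_left, hzx, hz'x]
    ring
  calc ρ * s * (q - 1) = s * (ρ * (q - 1)) := by ring
    _ ≤ s * ‖z - q • z'‖ := by
        exact mul_le_mul_of_nonneg_left hkey hs0.le
    _ = ‖s • (z - q • z')‖ := by
        rw [norm_smul, Real.norm_eq_abs, abs_of_pos hs0]
    _ ≤ ‖(s • (z - q • z')) + (t - q * t') • x‖ := pythagoras_aux _ _ h1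
end

section
/- For every q > 1, the Euclidean distance between ∂Q_s and q·∂Q_s equals ρ̄·(q−1). Moreover, if z ∈ ∂Q_s and w ∈ q·∂Q_s satisfy |w−z| = ρ̄·(q−1), then z ∈ P_x ∪ P_{−x}, and w = z + (q−1)·x if z ∈ P_x, while w = z − (q−1)·x if z ∈ P_{−x}. -/
open MeasureTheory Metric
open scoped ENNReal NNReal Pointwise RealInnerProductSpace

set_option maxHeartbeats 1000000 in
theorem stmt10 (d : ℕ) (hd : 0 < d)
    (μ : EuclideanSpace ℝ (Fin d) → ℝ)
    (hμ_add : ∀ z w, μ (z + w) ≤ μ z + μ w)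
    (hμ_smul : ∀ (c : ℝ) z, μ (c • z) = |c| * μ z)
    (hμ_eq : ∀ z, μ z = 0 ↔ z = 0)
    (ρ : ℝ) (hρ : IsLUB {r : ℝ | ∃ z : EuclideanSpace ℝ (Fin d), z ≠ 0 ∧ r = ‖z‖ / μ z} ρ)
    (x : EuclideanSpace ℝ (Fin d)) (hx1 : μ x = 1) (hx2 : ‖x‖ = ρ)
    (s : ℝ) (hs : 1 < s)
    (Q : Set (EuclideanSpace ℝ (Fin d)))
    (hQplane : ∀ z ∈ Q, ⟪z, x⟫ = 0)
    (hQcomp : IsCompact Q) (hQconv : Convex ℝ Q)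
    (hQsymm : ∀ z ∈ Q, -z ∈ Q)
    (hQball : ∀ z : EuclideanSpace ℝ (Fin d), ‖z‖ ≤ ρ → ⟪z, x⟫ = 0 → z ∈ Q)
    (Qs : Set (EuclideanSpace ℝ (Fin d)))
    (hQs : Qs = {y | ∃ z ∈ Q, ∃ t ∈ Set.Icc (-1 : ℝ) 1, y = s • z + t • x})
    (Px Pnx : Set (EuclideanSpace ℝ (Fin d)))
    (hPx : Px = {z | ⟪z - x, x⟫ = 0}) (hPnx : Pnx = {z | ⟪z + x, x⟫ = 0}) :
    ∀ q : ℝ, 1 < q →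
      IsGLB {r : ℝ | ∃ z ∈ frontier Qs, ∃ w ∈ q • frontier Qs, r = dist z w}
        (ρ * (q - 1)) ∧
      ∀ z ∈ frontier Qs, ∀ w ∈ q • frontier Qs, dist z w = ρ * (q - 1) →
        z ∈ Px ∪ Pnx ∧ (z ∈ Px → w = z + (q - 1) • x) ∧
          (z ∈ Pnx → w = z - (q - 1) • x) := by
  intro q hq
  have hx0 : x ≠ 0 := by
    intro h
    rw [h, (hμ_eq 0).mpr rfl] at hx1
    norm_num at hx1
  have hρpos : 0 < ρ := hx2 ▸ norm_pos_iff.mpr hx0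
  have hspos : 0 < s := lt_trans one_pos hs
  have hqpos : 0 < q := lt_trans one_pos hq
  have hxx : ⟪x, x⟫ = ρ ^ 2 := by rw [real_inner_self_eq_norm_sq, hx2]
  -- inner product of cylinder elements with x
  have hinner : ∀ a ∈ Q, ∀ t : ℝ, ⟪s • a + t • x, x⟫ = t * ρ ^ 2 := by
    intro a ha t
    rw [inner_add_left, real_inner_smul_left, real_inner_smul_left, hQplane a ha, hxx]
    ring
  -- orthogonal decomposition
  have hdecomp : ∀ e : EuclideanSpace ℝ (Fin d), ∃ p : EuclideanSpace ℝ (Fin d), ∃ c : ℝ,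
      e = p + c • x ∧ ⟪p, x⟫ = 0 ∧ ‖p‖ ≤ ‖e‖ ∧ |c| * ρ ≤ ‖e‖ := by
    intro e
    have hp : ⟪e - (⟪e, x⟫ / ρ ^ 2) • x, x⟫ = 0 := by
      rw [inner_sub_left, real_inner_smul_left, hxx]
      field_simp
      ring
    refine ⟨e - (⟪e, x⟫ / ρ ^ 2) • x, ⟪e, x⟫ / ρ ^ 2, by abel, hp, ?_, ?_⟩
    · have he : ‖e‖ ^ 2 = ‖e - (⟪e, x⟫ / ρ ^ 2) • x‖ ^ 2 + (⟪e, x⟫ / ρ ^ 2) ^ 2 * ρ ^ 2 := by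
        have h2 : e = (e - (⟪e, x⟫ / ρ ^ 2) • x) + (⟪e, x⟫ / ρ ^ 2) • x := by abel
        nth_rewrite 1 [h2]
        rw [norm_add_sq_real, real_inner_smul_right, hp, norm_smul, hx2, Real.norm_eq_abs,
          mul_pow, sq_abs]
        ring
      nlinarith [norm_nonneg (e - (⟪e, x⟫ / ρ ^ 2) • x), norm_nonneg e,
        sq_nonneg (⟪e, x⟫ / ρ ^ 2 * ρ)]
    · have hcs := abs_real_inner_le_norm e x
      rw [hx2] at hcs
      rw [abs_div, abs_of_pos (by positivity : (0:ℝ) < ρ ^ 2)]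
      rw [div_mul_eq_mul_div, div_le_iff₀ (by positivity)]
      calc |⟪e, x⟫| * ρ ≤ (‖e‖ * ρ) * ρ := by nlinarith [abs_nonneg ⟪e, x⟫]
        _ = ‖e‖ * ρ ^ 2 := by ring
  -- 0 ∈ Q
  have h0Q : (0 : EuclideanSpace ℝ (Fin d)) ∈ Q := by
    refine hQball 0 (by simp [hρpos.le]) (by simp)
  -- closed ball of radius ρ is inside Qs
  have hballQs : ∀ y : EuclideanSpace ℝ (Fin d), ‖y‖ ≤ ρ → y ∈ Qs := by
    intro y hy
    obtain ⟨p, c, hpc, hp0, hpn, hcn⟩ := hdecomp y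
    rw [hQs]
    refine ⟨s⁻¹ • p, hQball _ ?_ ?_, c, ?_, ?_⟩
    · rw [norm_smul, Real.norm_eq_abs, abs_of_pos (by positivity)]
      calc s⁻¹ * ‖p‖ ≤ 1 * ‖p‖ := by
            apply mul_le_mul_of_nonneg_right _ (norm_nonneg p)
            rw [inv_le_one_iff₀]; right; exact hs.le
        _ = ‖p‖ := one_mul _
        _ ≤ ‖y‖ := hpn
        _ ≤ ρ := hy
    · rw [real_inner_smul_left, hp0, mul_zero]
    · constructor
      · nlinarith [le_trans hcn hy, abs_nonneg c, neg_abs_le c]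
      · nlinarith [le_trans hcn hy, le_abs_self c]
    · rw [smul_inv_smul₀ (ne_of_gt hspos)]
      exact hpc
  -- open ball is in the interior
  have hint : ∀ y : EuclideanSpace ℝ (Fin d), ‖y‖ < ρ → y ∈ interior Qs := by
    intro y hy
    have : ball (0 : EuclideanSpace ℝ (Fin d)) ρ ⊆ interior Qs := by
      apply interior_maximal _ isOpen_ball
      intro v hv
      exact hballQs v (le_of_lt (by simpa using mem_ball_zero_iff.mp hv))
    exact this (mem_ball_zero_iff.mpr hy)
  -- Qs is compact, hence closed
  have hQscomp : IsCompact Qs := by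
    have himg : Qs = (fun pr : EuclideanSpace ℝ (Fin d) × ℝ => s • pr.1 + pr.2 • x) ''
        (Q ×ˢ Set.Icc (-1 : ℝ) 1) := by
      rw [hQs]; ext y
      constructor
      · rintro ⟨z, hz, t, ht, rfl⟩; exact ⟨(z, t), ⟨hz, ht⟩, rfl⟩
      · rintro ⟨⟨z, t⟩, ⟨hz, ht⟩, rfl⟩; exact ⟨z, hz, t, ht, rfl⟩
    rw [himg]
    exact (hQcomp.prod isCompact_Icc).image (by fun_prop)
  have hQsclosed : IsClosed Qs := hQscomp.isClosed
  -- Qs is convex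
  have hQsconv : Convex ℝ Qs := by
    rw [hQs]
    rintro y₁ ⟨z₁, hz₁, t₁, ht₁, rfl⟩ y₂ ⟨z₂, hz₂, t₂, ht₂, rfl⟩ a b ha hb hab
    refine ⟨a • z₁ + b • z₂, hQconv hz₁ hz₂ ha hb hab, a * t₁ + b * t₂,
      (convex_Icc (-1 : ℝ) 1) ht₁ ht₂ ha hb hab, ?_⟩
    module
  -- interior criterion
  have hL1 : ∀ (b : EuclideanSpace ℝ (Fin d)) (u δ : ℝ), 0 < δ →
      (∀ h : EuclideanSpace ℝ (Fin d), ‖h‖ ≤ δ → ⟪h, x⟫ = 0 → b + h ∈ Q) → |u| < 1 →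
      s • b + u • x ∈ interior Qs := by
    intro b u δ hδ hnb hu
    have hb : b ∈ Q := by simpa using hnb 0 (by simp [hδ.le]) (by simp)
    rw [mem_interior]
    refine ⟨ball (s • b + u • x) (min (s * δ) (ρ * (1 - |u|))), ?_, isOpen_ball,
      mem_ball_self (lt_min (by positivity) (mul_pos hρpos (by linarith [hu])))⟩
    intro y hy
    rw [mem_ball, dist_eq_norm] at hy
    obtain ⟨p, c, hpc, hp0, hpn, hcn⟩ := hdecomp (y - (s • b + u • x))
    have hylt1 : ‖y - (s • b + u • x)‖ < s * δ := lt_of_lt_of_le hy (min_le_left _ _)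
    have hylt2 : ‖y - (s • b + u • x)‖ < ρ * (1 - |u|) := lt_of_lt_of_le hy (min_le_right _ _)
    have hclt : |c| < 1 - |u| := by
      by_contra hcon
      push_neg at hcon
      nlinarith
    rw [hQs]
    refine ⟨b + s⁻¹ • p, hnb _ ?_ ?_, u + c, ?_, ?_⟩
    · rw [norm_smul, Real.norm_eq_abs, abs_of_pos (by positivity)]
      rw [inv_mul_le_iff₀ hspos]
      calc ‖p‖ ≤ ‖y - (s • b + u • x)‖ := hpn
        _ ≤ s * δ := hylt1.le
    · rw [real_inner_smul_left, hp0, mul_zero]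
    · have h1 : |u + c| < 1 := by
        calc |u + c| ≤ |u| + |c| := abs_add_le _ _
          _ < 1 := by linarith
      rw [abs_lt] at h1
      exact ⟨h1.1.le, h1.2.le⟩
    · have : y = (s • b + u • x) + (p + c • x) := by rw [← hpc]; abel
      rw [this, smul_add, smul_inv_smul₀ (ne_of_gt hspos)]
      module
  -- every element of Qs has inner product with x at most ρ²
  have hinnb : ∀ y ∈ Qs, ⟪y, x⟫ ≤ ρ ^ 2 ∧ -ρ ^ 2 ≤ ⟪y, x⟫ := by
    intro y hy
    rw [hQs] at hy
    obtain ⟨z, hz, t, ht, rfl⟩ := hy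
    rw [hinner z hz t]
    constructor
    · nlinarith [ht.2, sq_nonneg ρ]
    · nlinarith [ht.1, sq_nonneg ρ]
  -- x is on the frontier of Qs
  have hxQs : x ∈ Qs := by
    rw [hQs]
    exact ⟨0, h0Q, 1, ⟨by norm_num, le_refl 1⟩, by simp⟩
  have hxfr : x ∈ frontier Qs := by
    refine ⟨subset_closure hxQs, ?_⟩
    intro hin
    rw [mem_interior_iff_mem_nhds, Metric.mem_nhds_iff] at hin
    obtain ⟨ε, hε, hball⟩ := hin
    have hmem : x + (ε / (2 * ρ)) • x ∈ Qs := by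
      apply hball
      rw [mem_ball, dist_eq_norm]
      have : x + (ε / (2 * ρ)) • x - x = (ε / (2 * ρ)) • x := by abel
      rw [this, norm_smul, Real.norm_eq_abs, abs_of_pos (by positivity), hx2]
      rw [div_mul_eq_mul_div, div_lt_iff₀ (by positivity)]
      nlinarith
    have := (hinnb _ hmem).1
    rw [inner_add_left, real_inner_smul_left, hxx] at this
    nlinarith [mul_pos (div_pos hε (by positivity : (0:ℝ) < 2 * ρ))
      (by positivity : (0:ℝ) < ρ ^ 2)]
  -- frontier points of norm ρ are ±x
  have hfront_norm : ∀ v ∈ frontier Qs, ‖v‖ = ρ → v = x ∨ v = -x := by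
    intro v hv hvn
    have hvQs : v ∈ Qs := hQsclosed.frontier_subset hv
    have hvni : v ∉ interior Qs := hv.2
    rw [hQs] at hvQs
    obtain ⟨b, hb, u, hu, rfl⟩ := hvQs
    have hbperp : ⟪b, x⟫ = 0 := hQplane b hb
    have hsq : ‖s • b + u • x‖ ^ 2 = s ^ 2 * ‖b‖ ^ 2 + u ^ 2 * ρ ^ 2 := by
      rw [norm_add_sq_real, real_inner_smul_left, real_inner_smul_right, hbperp,
        norm_smul, norm_smul, hx2, Real.norm_eq_abs, Real.norm_eq_abs, mul_pow, mul_pow,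
        sq_abs, sq_abs]
      ring
    have hpyth : ρ ^ 2 = s ^ 2 * ‖b‖ ^ 2 + u ^ 2 * ρ ^ 2 := by rw [← hsq, hvn]
    have huabs : |u| ≤ 1 := abs_le.mpr hu
    have hu1 : |u| = 1 := by
      by_contra hu1
      have hult : |u| < 1 := lt_of_le_of_ne huabs hu1
      apply hvni
      apply hL1 b u (ρ - ‖b‖) _ _ hult
      · have hu2 : u ^ 2 ≤ 1 := by nlinarith [sq_abs u, abs_nonneg u]
        have h1 : s ^ 2 * ‖b‖ ^ 2 ≤ ρ ^ 2 := by nlinarith [sq_nonneg ρ]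
        have h2 : s * ‖b‖ ≤ ρ := by
          nlinarith [sq_nonneg (s * ‖b‖ - ρ), hρpos, mul_nonneg hspos.le (norm_nonneg b)]
        have hbρ : ‖b‖ < ρ := by
          have h3 : ‖b‖ ≤ ρ / s := by rw [le_div_iff₀ hspos]; linarith
          have h4 : ρ / s < ρ := by rw [div_lt_iff₀ hspos]; nlinarith
          linarith
        linarith
      · intro h hn hperp
        apply hQball
        · calc ‖b + h‖ ≤ ‖b‖ + ‖h‖ := norm_add_le _ _
            _ ≤ ρ := by linarith
        · rw [inner_add_left, hbperp, hperp, add_zero]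
    have hb0 : b = 0 := by
      have hu2 : u ^ 2 = 1 := by rw [← sq_abs, hu1, one_pow]
      have hb2 : ‖b‖ ^ 2 = 0 := by nlinarith [mul_pos hspos hspos]
      exact norm_eq_zero.mp (pow_eq_zero_iff two_ne_zero |>.mp hb2)
    rw [hb0, smul_zero, zero_add]
    rcases abs_eq (by norm_num : (0:ℝ) ≤ 1) |>.mp hu1 with h | h
    · left; rw [h, one_smul]
    · right; rw [h, neg_one_smul]
  -- frontier points: basic facts
  have hfrQs : ∀ y ∈ frontier Qs, y ∈ Qs := fun y hy => hQsclosed.frontier_subset hy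
  -- the lower bound
  have hlb : ∀ z ∈ Qs, ∀ y ∈ frontier Qs, ρ * (q - 1) ≤ dist z (q • y) := by
    intro z hz y hy
    by_contra hcon
    push_neg at hcon
    apply hy.2
    have hvn : ‖(q - 1)⁻¹ • (q • y - z)‖ < ρ := by
      rw [norm_smul, Real.norm_eq_abs, abs_of_pos (by rw [inv_pos]; linarith : (0:ℝ) < (q-1)⁻¹)]
      rw [inv_mul_lt_iff₀ (by linarith : (0:ℝ) < q - 1)]
      rw [dist_eq_norm] at hcon
      calc ‖q • y - z‖ = ‖z - q • y‖ := (norm_sub_rev _ _)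
        _ < ρ * (q - 1) := hcon
        _ = (q - 1) * ρ := mul_comm _ _
    have hvint := hint _ hvn
    have hcomb : y = q⁻¹ • z + (1 - q⁻¹) • ((q - 1)⁻¹ • (q • y - z)) := by
      rw [smul_smul]
      have hq1 : (1 - q⁻¹) * (q - 1)⁻¹ = q⁻¹ := by
        have hq0 : q ≠ 0 := ne_of_gt hqpos
        have hq10 : q - 1 ≠ 0 := sub_ne_zero.mpr (ne_of_gt hq)
        field_simp
      rw [hq1, smul_sub, ← smul_assoc, smul_eq_mul, inv_mul_cancel₀ (ne_of_gt hqpos), one_smul]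
      abel
    rw [hcomb]
    exact hQsconv.combo_self_interior_mem_interior hz hvint (by positivity)
      (by rw [sub_pos, inv_lt_one_iff₀]; right; exact hq) (by ring)
  constructor
  · constructor
    · rintro r ⟨z, hz, w, hw, rfl⟩
      obtain ⟨y, hy, rfl⟩ := hw
      exact hlb z (hfrQs z hz) y hy
    · intro b hb
      apply hb
      refine ⟨x, hxfr, q • x, Set.smul_mem_smul_set hxfr, ?_⟩
      rw [dist_eq_norm]
      have h1 : x - q • x = (1 - q) • x := by module
      rw [h1, norm_smul, Real.norm_eq_abs, hx2, abs_of_nonpos (by linarith)]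
      ring
  · intro z hz w hw hdist
    obtain ⟨y, hy, rfl⟩ := hw
    -- the connecting direction
    have hq1pos : (0:ℝ) < q - 1 := by linarith
    have hvsmul : (q - 1) • ((q - 1)⁻¹ • (q • y - z)) = q • y - z :=
      smul_inv_smul₀ (ne_of_gt hq1pos) _
    have hvn : ‖(q - 1)⁻¹ • (q • y - z)‖ = ρ := by
      rw [norm_smul, Real.norm_eq_abs, abs_of_pos (by rw [inv_pos]; linarith : (0:ℝ) < (q-1)⁻¹)]
      rw [dist_eq_norm] at hdist
      rw [norm_sub_rev] at hdist
      rw [hdist]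
      field_simp
    have hcomb : y = q⁻¹ • z + (1 - q⁻¹) • ((q - 1)⁻¹ • (q • y - z)) := by
      rw [smul_smul]
      have hq1 : (1 - q⁻¹) * (q - 1)⁻¹ = q⁻¹ := by
        have hq0 : q ≠ 0 := ne_of_gt hqpos
        have hq10 : q - 1 ≠ 0 := sub_ne_zero.mpr (ne_of_gt hq)
        field_simp
      rw [hq1, smul_sub, ← smul_assoc, smul_eq_mul, inv_mul_cancel₀ (ne_of_gt hqpos), one_smul]
      abel
    have hvfr : (q - 1)⁻¹ • (q • y - z) ∈ frontier Qs := by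
      refine ⟨subset_closure (hballQs _ hvn.le), ?_⟩
      intro hvint
      apply hy.2
      rw [hcomb]
      exact hQsconv.combo_self_interior_mem_interior (hfrQs z hz) hvint (by positivity)
        (by rw [sub_pos, inv_lt_one_iff₀]; right; exact hq) (by ring)
    have hvx := hfront_norm _ hvfr hvn
    -- representation of z
    have hzQs := hfrQs z hz
    rw [hQs] at hzQs
    obtain ⟨a, ha, t, ht, hzeq⟩ := hzQs
    have hzin : ⟪z, x⟫ = t * ρ ^ 2 := by rw [hzeq]; exact hinner a ha t
    -- neighborhood property for q⁻¹ • a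
    have hna : ∀ h : EuclideanSpace ℝ (Fin d), ‖h‖ ≤ ρ * (1 - q⁻¹) → ⟪h, x⟫ = 0 →
        q⁻¹ • a + h ∈ Q := by
      intro h hn hperp
      have hq1' : (0:ℝ) < 1 - q⁻¹ := by
        rw [sub_pos, inv_lt_one_iff₀]; right; exact hq
      have hmem : (1 - q⁻¹)⁻¹ • h ∈ Q := by
        apply hQball
        · rw [norm_smul, Real.norm_eq_abs, abs_of_pos (by positivity)]
          rw [inv_mul_le_iff₀ hq1']
          calc ‖h‖ ≤ ρ * (1 - q⁻¹) := hn
            _ = (1 - q⁻¹) * ρ := mul_comm _ _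
        · rw [real_inner_smul_left, hperp, mul_zero]
      have := hQconv ha hmem (by positivity : (0:ℝ) ≤ q⁻¹) hq1'.le (by ring)
      rwa [smul_inv_smul₀ (ne_of_gt hq1')] at this
    -- the key sign lemma
    have hkey : ∀ ε : ℝ, ε = 1 ∨ ε = -1 → q • y = z + ((q - 1) * ε) • x → t = ε := by
      intro ε hε hqy
      by_contra htne
      apply hy.2
      have hyeq : y = s • (q⁻¹ • a) + ((t + (q - 1) * ε) / q) • x := by
        have h1 : y = q⁻¹ • (q • y) := by
          rw [smul_smul, inv_mul_cancel₀ (ne_of_gt hqpos), one_smul]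
        rw [h1, hqy, hzeq]
        have h2 : s • a + t • x + ((q - 1) * ε) • x = s • a + (t + (q - 1) * ε) • x := by
          module
        rw [h2, div_eq_mul_inv]
        module
      rw [hyeq]
      apply hL1 (q⁻¹ • a) _ (ρ * (1 - q⁻¹)) (by
        have : (0:ℝ) < 1 - q⁻¹ := by rw [sub_pos, inv_lt_one_iff₀]; right; exact hq
        positivity) hna
      rw [abs_div, abs_of_pos hqpos, div_lt_one hqpos]
      rcases hε with rfl | rfl
      · have htlt : t < 1 := lt_of_le_of_ne ht.2 htne
        rw [abs_lt]
        constructor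
        · nlinarith [ht.1]
        · nlinarith
      · have htgt : -1 < t := lt_of_le_of_ne ht.1 (fun h => htne h.symm)
        rw [abs_lt]
        constructor
        · nlinarith
        · nlinarith [ht.2]
    rcases hvx with hv1 | hv1
    · -- v = x : top face
      have hqy : q • y = z + ((q - 1) * 1) • x := by
        have h := hvsmul
        rw [hv1] at h
        have h2 := sub_eq_iff_eq_add'.mp h.symm
        rw [h2]; module
      have ht1 : t = 1 := hkey 1 (Or.inl rfl) hqy
      have hzPx : z ∈ Px := by
        rw [hPx]
        show ⟪z - x, x⟫ = 0
        rw [inner_sub_left, hzin, hxx, ht1]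
        ring
      have hznPnx : z ∉ Pnx := by
        rw [hPnx]
        intro hcon
        have : ⟪z + x, x⟫ = 0 := hcon
        rw [inner_add_left, hzin, hxx, ht1] at this
        nlinarith
      refine ⟨Or.inl hzPx, fun _ => ?_, fun h => absurd h hznPnx⟩
      show q • y = z + (q - 1) • x
      rw [hqy]; module
    · -- v = -x : bottom face
      have hqy : q • y = z + ((q - 1) * (-1)) • x := by
        have h := hvsmul
        rw [hv1] at h
        have h2 := sub_eq_iff_eq_add'.mp h.symm
        rw [h2]; module
      have ht1 : t = -1 := hkey (-1) (Or.inr rfl) hqy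
      have hzPnx : z ∈ Pnx := by
        rw [hPnx]
        show ⟪z + x, x⟫ = 0
        rw [inner_add_left, hzin, hxx, ht1]
        ring
      have hznPx : z ∉ Px := by
        rw [hPx]
        intro hcon
        have : ⟪z - x, x⟫ = 0 := hcon
        rw [inner_sub_left, hzin, hxx, ht1] at this
        nlinarith
      refine ⟨Or.inr hzPnx, fun h => absurd h hznPx, fun _ => ?_⟩
      show q • y = z - (q - 1) • x
      rw [hqy]; module
end

section
/- Let q > 1. For every z ∈ ∂Q_s there exists c ∈ ℝ such that z + c·x ∈ q·(P_x ∪ P_{−x}) and D(z, z + c·x) ≤ (1 − q^{1−α})/(κ̄_s·(α−1)) + 1/κ̲_s. -/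
open MeasureTheory Metric
open scoped ENNReal NNReal Pointwise RealInnerProductSpace

lemma stmt13_dmet_le {d : ℕ} (μ f : EuclideanSpace ℝ (Fin d) → ℝ)
    (z w : EuclideanSpace ℝ (Fin d)) : Dmet μ f z w ≤ segLen μ f z w := by
  unfold Dmet
  refine iInf_le_of_le 1 (iInf_le_of_le ![z, w] (iInf_le_of_le rfl (iInf_le_of_le rfl ?_)))
  rw [Fin.sum_univ_one]
  exact le_of_eq rfl

lemma stmt13_intlem (t' q α κ κlow : ℝ) (ht0 : 0 ≤ t') (ht1 : t' ≤ 1) (hq : 1 < q)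
    (hα : 1 < α) (hκlow : 0 < κlow) (hκκ : κlow ≤ κ) :
    ENNReal.ofReal (q - t') * ∫⁻ t in Set.Ioo (0:ℝ) 1,
      ENNReal.ofReal (if t * (q - t') ≤ 1 - t' then κlow⁻¹
        else κ⁻¹ * (t' + (q - t') * t) ^ (-α))
    ≤ ENNReal.ofReal ((1 - q ^ (1 - α)) / (κ * (α - 1)) + 1 / κlow) := by
  set c := q - t' with hcdef
  set u₁ := 1 - t' with hu₁def
  set H : ℝ → ℝ := fun t => if t * c ≤ u₁ then κlow⁻¹ else κ⁻¹ * (t' + c * t) ^ (-α) with hH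
  have hc : 0 < c := by simp only [hcdef]; linarith
  have hκpos : 0 < κ := lt_of_lt_of_le hκlow hκκ
  have hu₁ : 0 ≤ u₁ := by simp only [hu₁def]; linarith
  have hu₁c : u₁ < c := by simp only [hcdef, hu₁def]; linarith
  set t₁ := u₁ / c with ht₁def
  have ht₁0 : 0 ≤ t₁ := div_nonneg hu₁ hc.le
  have ht₁1 : t₁ < 1 := (div_lt_one hc).2 hu₁c
  have ht₁c : t₁ * c = u₁ := div_mul_cancel₀ _ hc.ne'
  have hrpow_meas : Measurable (fun v : ℝ => v ^ (-α)) :=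
    measurable_of_continuousOn_compl_singleton 0 (fun v hv =>
      (Real.continuousAt_rpow_const v (-α) (Or.inl hv)).continuousWithinAt)
  have Hmeas : Measurable H := by
    apply Measurable.ite (measurableSet_le (measurable_id.mul_const c) measurable_const)
      measurable_const
    exact measurable_const.mul
      (hrpow_meas.comp (measurable_const.add (measurable_id.const_mul c)))
  have Hbase : ∀ t : ℝ, ¬ (t * c ≤ u₁) → 1 < t' + c * t := by
    intro t h
    push_neg at h
    rw [mul_comm] at h
    simp only [hu₁def] at h; linarith
  have Hnonneg : ∀ t, 0 ≤ H t := by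
    intro t
    simp only [hH]
    split_ifs with h
    · positivity
    · have := Hbase t h
      positivity
  have Hbdd : ∀ t, ‖H t‖ ≤ κlow⁻¹ := by
    intro t
    rw [Real.norm_eq_abs, abs_of_nonneg (Hnonneg t)]
    simp only [hH]
    split_ifs with h
    · exact le_rfl
    · have hb := Hbase t h
      have h1 : (t' + c * t) ^ (-α) ≤ 1 :=
        Real.rpow_le_one_of_one_le_of_nonpos hb.le (by linarith)
      calc κ⁻¹ * (t' + c * t) ^ (-α) ≤ κ⁻¹ * 1 := by
            apply mul_le_mul_of_nonneg_left h1 (by positivity)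
        _ ≤ κlow⁻¹ := by rw [mul_one]; exact inv_anti₀ hκlow hκκ
  have Hint : ∀ a b : ℝ, IntervalIntegrable H volume a b := by
    intro a b
    constructor <;>
    · refine (integrableOn_const measure_Ioc_lt_top.ne enorm_ne_top).mono'
        Hmeas.aestronglyMeasurable.restrict (ae_of_all _ fun t => Hbdd t)
  have hA : ∫ t in (0:ℝ)..t₁, H t = t₁ * κlow⁻¹ := by
    rw [intervalIntegral.integral_congr (g := fun _ => κlow⁻¹)]
    · simp [smul_eq_mul]
    · intro t ht
      rw [Set.uIcc_of_le ht₁0] at ht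
      have : t * c ≤ u₁ := by
        calc t * c ≤ t₁ * c := mul_le_mul_of_nonneg_right ht.2 hc.le
          _ = u₁ := ht₁c
      simp only [hH, if_pos this]
  have hB : ∫ t in t₁..(1:ℝ), H t = κ⁻¹ * (c⁻¹ * ((q ^ (1 - α) - 1) / (1 - α))) := by
    rw [intervalIntegral.integral_congr_ae (g := fun t => κ⁻¹ * (t' + c * t) ^ (-α))]
    · rw [intervalIntegral.integral_const_mul]
      have hsub := intervalIntegral.integral_comp_add_mul (f := fun v : ℝ => v ^ (-α))
        (a := t₁) (b := 1) hc.ne' t'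
      rw [hsub]
      have e1 : t' + c * t₁ = 1 := by rw [mul_comm c t₁, ht₁c]; simp only [hu₁def]; ring
      have e2 : t' + c * 1 = q := by simp only [hcdef]; ring
      rw [e1, e2, integral_rpow (Or.inr ⟨by intro hcon; linarith [neg_eq_iff_eq_neg.mp hcon],
        fun hmem => by rw [Set.uIcc_of_le hq.le] at hmem; linarith [hmem.1]⟩)]
      rw [Real.one_rpow]
      have : -α + 1 = 1 - α := by ring
      rw [this, smul_eq_mul]
    · apply Filter.Eventually.of_forall
      intro t ht
      rw [Set.uIoc_of_le ht₁1.le] at ht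
      have : ¬ (t * c ≤ u₁) := by
        push_neg
        calc u₁ = t₁ * c := ht₁c.symm
          _ < t * c := by apply mul_lt_mul_of_pos_right ht.1 hc
      simp only [hH, if_neg this]
  have hIoo : (∫⁻ t in Set.Ioo (0:ℝ) 1,
      ENNReal.ofReal (if t * c ≤ u₁ then κlow⁻¹ else κ⁻¹ * (t' + c * t) ^ (-α)))
      = ENNReal.ofReal (∫ t in (0:ℝ)..1, H t) := by
    have hint01 : IntegrableOn H (Set.Ioo (0:ℝ) 1) volume :=
      (integrableOn_const measure_Ioo_lt_top.ne enorm_ne_top).mono'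
        Hmeas.aestronglyMeasurable.restrict (ae_of_all _ fun t => Hbdd t)
    rw [intervalIntegral.integral_of_le zero_le_one, integral_Ioc_eq_integral_Ioo,
      ofReal_integral_eq_lintegral_ofReal hint01 (ae_of_all _ Hnonneg)]
  calc ENNReal.ofReal c * ∫⁻ t in Set.Ioo (0:ℝ) 1,
        ENNReal.ofReal (if t * c ≤ u₁ then κlow⁻¹ else κ⁻¹ * (t' + c * t) ^ (-α))
      = ENNReal.ofReal (c * ∫ t in (0:ℝ)..1, H t) := by
        rw [hIoo, ← ENNReal.ofReal_mul hc.le]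
    _ ≤ ENNReal.ofReal ((1 - q ^ (1 - α)) / (κ * (α - 1)) + 1 / κlow) := by
        apply ENNReal.ofReal_le_ofReal
        rw [← intervalIntegral.integral_add_adjacent_intervals (Hint 0 t₁) (Hint t₁ 1),
          hA, hB]
        set Y := (q ^ (1 - α) - 1) / (1 - α) with hY
        have hid : c * (t₁ * κlow⁻¹ + κ⁻¹ * (c⁻¹ * Y)) = u₁ * κlow⁻¹ + (κ⁻¹ * Y) := by
          have : c * (t₁ * κlow⁻¹ + κ⁻¹ * (c⁻¹ * Y))
              = (t₁ * c) * κlow⁻¹ + (c * c⁻¹) * (κ⁻¹ * Y) := by ring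
          rw [this, mul_inv_cancel₀ hc.ne', ht₁c, one_mul]
        rw [hid]
        have hrhs : (1 - q ^ (1 - α)) / (κ * (α - 1)) = κ⁻¹ * Y := by
          rw [hY]
          have hα1 : α - 1 ≠ 0 := sub_ne_zero.2 (by linarith)
          have h1α : (1 : ℝ) - α ≠ 0 := sub_ne_zero.2 (by linarith)
          field_simp
          ring
        rw [hrhs]
        have hu₁1 : u₁ ≤ 1 := by rw [hu₁def]; linarith
        have : u₁ * κlow⁻¹ ≤ 1 / κlow := by
          rw [one_div]
          nlinarith [inv_nonneg.2 hκlow.le]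
        linarith


set_option maxHeartbeats 1000000 in
theorem stmt13 (d : ℕ) (hd : 0 < d)
    (μ : EuclideanSpace ℝ (Fin d) → ℝ)
    (hμ_add : ∀ z w, μ (z + w) ≤ μ z + μ w)
    (hμ_smul : ∀ (c : ℝ) z, μ (c • z) = |c| * μ z)
    (hμ_eq : ∀ z, μ z = 0 ↔ z = 0)
    (ρ : ℝ) (hρ : IsLUB {r : ℝ | ∃ z : EuclideanSpace ℝ (Fin d), z ≠ 0 ∧ r = ‖z‖ / μ z} ρ)
    (x : EuclideanSpace ℝ (Fin d)) (hx1 : μ x = 1) (hx2 : ‖x‖ = ρ)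
    (s : ℝ) (hs : 1 < s)
    (Q : Set (EuclideanSpace ℝ (Fin d)))
    (hQplane : ∀ z ∈ Q, ⟪z, x⟫ = 0)
    (hQcomp : IsCompact Q) (hQconv : Convex ℝ Q)
    (hQsymm : ∀ z ∈ Q, -z ∈ Q)
    (hQball : ∀ z : EuclideanSpace ℝ (Fin d), ‖z‖ ≤ ρ → ⟪z, x⟫ = 0 → z ∈ Q)
    (Qs : Set (EuclideanSpace ℝ (Fin d)))
    (hQs : Qs = {y | ∃ z ∈ Q, ∃ t ∈ Set.Icc (-1 : ℝ) 1, y = s • z + t • x})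
    (Px Pnx : Set (EuclideanSpace ℝ (Fin d)))
    (hPx : Px = {z | ⟪z - x, x⟫ = 0}) (hPnx : Pnx = {z | ⟪z + x, x⟫ = 0})
    (α : ℝ) (hα : 1 < α)
    (fs : EuclideanSpace ℝ (Fin d) → ℝ) (K : NNReal)
    (hfsLip : LipschitzOnWith K fs (frontier Qs))
    (hfspos : ∀ z ∈ frontier Qs, 0 < fs z)
    (κ : ℝ) (hκ : IsLUB (fs '' frontier Qs) κ)
    (hfsflat : ∀ z ∈ frontier Qs ∩ (Px ∪ Pnx), fs z = κ)
    (f : EuclideanSpace ℝ (Fin d) → ℝ) (hf0 : f 0 = 0)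
    (hf : ∀ z : EuclideanSpace ℝ (Fin d), z ≠ 0 →
      f z = gauge Qs z ^ α * fs ((gauge Qs z)⁻¹ • z))
    (κlow : ℝ) (hκlow : IsGLB (fs '' frontier Qs) κlow)
    (q : ℝ) (hq : 1 < q) :
    ∀ z ∈ frontier Qs, ∃ c : ℝ,
      z + c • x ∈ q • (Px ∪ Pnx) ∧
      Dmet μ f z (z + c • x) ≤
        ENNReal.ofReal ((1 - q ^ (1 - α)) / (κ * (α - 1)) + 1 / κlow) := by
  intro z hz
  have hx0 : x ≠ 0 := by
    intro h
    rw [h, (hμ_eq 0).2 rfl] at hx1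
    exact one_ne_zero hx1.symm
  have hnx : 0 < ‖x‖ := norm_pos_iff.2 hx0
  have hρpos : 0 < ρ := hx2 ▸ hnx
  have hspos : 0 < s := by linarith
  have h0Q : (0 : EuclideanSpace ℝ (Fin d)) ∈ Q :=
    hQball 0 (by simp [hρpos.le]) (by simp)
  have hQsmem : ∀ w ∈ Q, ∀ t : ℝ, |t| ≤ 1 → s • w + t • x ∈ Qs := by
    intro w hw t ht
    rw [hQs]
    exact ⟨w, hw, t, abs_le.1 ht, rfl⟩
  -- Qs is compact
  have hQscompact : IsCompact Qs := by
    have himg : Qs = (fun p : (EuclideanSpace ℝ (Fin d)) × ℝ => s • p.1 + p.2 • x) ''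
        (Q ×ˢ Set.Icc (-1 : ℝ) 1) := by
      rw [hQs]; ext y
      simp only [Set.mem_image, Set.mem_prod, Set.mem_setOf_eq, Prod.exists]
      constructor
      · rintro ⟨w, hw, t, ht, rfl⟩; exact ⟨w, t, ⟨hw, ht⟩, rfl⟩
      · rintro ⟨w, t, ⟨hw, ht⟩, rfl⟩; exact ⟨w, hw, t, ht, rfl⟩
    rw [himg]
    exact (hQcomp.prod isCompact_Icc).image
      ((continuous_fst.const_smul s).add (continuous_snd.smul continuous_const))
  have hQsclosed : IsClosed Qs := hQscompact.isClosed
  have hQsconv : Convex ℝ Qs := by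
    intro y1 h1 y2 h2 a b ha hb hab
    rw [hQs] at h1 h2 ⊢
    obtain ⟨w1, hw1, t1, ht1, rfl⟩ := h1
    obtain ⟨w2, hw2, t2, ht2, rfl⟩ := h2
    refine ⟨a • w1 + b • w2, hQconv hw1 hw2 ha hb hab,
      a * t1 + b * t2, (convex_Icc (-1 : ℝ) 1) ht1 ht2 ha hb hab, ?_⟩
    module
  have hcoord : ∀ y ∈ Qs, |⟪y, x⟫| ≤ ‖x‖ ^ 2 := by
    intro y hy
    rw [hQs] at hy
    obtain ⟨w, hw, t, ht, rfl⟩ := hy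
    rw [inner_add_left, real_inner_smul_left, real_inner_smul_left, hQplane w hw,
      real_inner_self_eq_norm_sq]
    rw [mul_zero, zero_add, abs_mul, abs_of_nonneg (by positivity : (0:ℝ) ≤ ‖x‖^2)]
    have : |t| ≤ 1 := abs_le.2 ht
    nlinarith [sq_nonneg ‖x‖]
  -- Qs is a neighborhood of 0
  have h0int : Qs ∈ nhds (0 : EuclideanSpace ℝ (Fin d)) := by
    refine Filter.mem_of_superset (Metric.ball_mem_nhds 0 hρpos) ?_
    intro y hy
    rw [mem_ball_zero_iff] at hy
    set τ := ⟪y, x⟫ / ‖x‖ ^ 2 with hτ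
    set w := s⁻¹ • (y - τ • x) with hwdef
    have hyx : ⟪y - τ • x, x⟫ = 0 := by
      rw [inner_sub_left, real_inner_smul_left, real_inner_self_eq_norm_sq, hτ,
        div_mul_cancel₀ _ (by positivity : ‖x‖ ^ 2 ≠ 0), sub_self]
    have hwx : ⟪w, x⟫ = 0 := by
      rw [hwdef, real_inner_smul_left, hyx, mul_zero]
    have hnorm : ‖y - τ • x‖ ≤ ‖y‖ := by
      have h := norm_add_sq_real (y - τ • x) (τ • x)
      rw [sub_add_cancel, real_inner_smul_right, hyx, mul_zero] at h
      nlinarith [norm_nonneg (y - τ • x), norm_nonneg y, sq_nonneg ‖τ • x‖]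
    have hwQ : w ∈ Q := by
      apply hQball w _ hwx
      rw [hwdef, norm_smul, Real.norm_eq_abs, abs_of_pos (inv_pos.2 hspos)]
      have : ‖y - τ • x‖ < ρ := lt_of_le_of_lt hnorm hy
      calc s⁻¹ * ‖y - τ • x‖ ≤ 1 * ‖y - τ • x‖ := by
            apply mul_le_mul_of_nonneg_right _ (norm_nonneg _)
            rw [inv_le_one_iff₀]; right; linarith
        _ ≤ ρ := by rw [one_mul]; exact hnorm.trans hy.le
    have hτ1 : |τ| ≤ 1 := by
      rw [hτ, abs_div, abs_of_nonneg (by positivity : (0:ℝ) ≤ ‖x‖ ^ 2)]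
      rw [div_le_one (by positivity)]
      calc |⟪y, x⟫| ≤ ‖y‖ * ‖x‖ := abs_real_inner_le_norm y x
        _ ≤ ‖x‖ * ‖x‖ := by
            apply mul_le_mul_of_nonneg_right _ (norm_nonneg x)
            rw [hx2]; exact hy.le
        _ = ‖x‖ ^ 2 := by ring
    have : s • w + τ • x = y := by
      rw [hwdef, smul_inv_smul₀ hspos.ne']
      abel
    rw [← this]
    exact hQsmem w hwQ τ hτ1
  have hzint : z ∉ interior Qs := hz.2
  have hgfr : ∀ y, y ∈ frontier Qs → gauge Qs y = 1 := fun y hy =>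
    (gauge_eq_one_iff_mem_frontier hQsconv h0int).2 hy
  have h0mem : (0 : EuclideanSpace ℝ (Fin d)) ∈ interior Qs :=
    mem_interior_iff_mem_nhds.2 h0int
  have hffront : ∀ y, y ∈ frontier Qs → f y = fs y := by
    intro y hy
    have hy0 : y ≠ 0 := by
      rintro rfl
      exact hy.2 h0mem
    rw [hf y hy0, hgfr y hy, Real.one_rpow, inv_one, one_smul, one_mul]
  -- kappa facts
  have hfrsub : frontier Qs ⊆ Qs := by
    have h := frontier_subset_closure (s := Qs)
    rwa [hQsclosed.closure_eq] at h
  have hfrcomp : IsCompact (frontier Qs) :=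
    hQscompact.of_isClosed_subset isClosed_frontier hfrsub
  have hκlowpos : 0 < κlow := by
    obtain ⟨m, hm, hmin⟩ := hfrcomp.exists_isMinOn ⟨z, hz⟩ hfsLip.continuousOn
    have : fs m ≤ κlow := by
      apply hκlow.2
      rintro _ ⟨y, hy, rfl⟩
      exact hmin hy
    linarith [hfspos m hm]
  have hκge : κlow ≤ κ := le_trans (hκlow.1 ⟨z, hz, rfl⟩) (hκ.1 ⟨z, hz, rfl⟩)
  have hκpos : 0 < κ := lt_of_lt_of_le hκlowpos hκge
  -- decompose z
  have hzQs : z ∈ Qs := hfrsub hz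
  rw [hQs] at hzQs
  obtain ⟨w, hw, t, ht, hzeq⟩ := hzQs
  obtain ⟨σ, hσdef⟩ : ∃ u : ℝ, u = if 0 ≤ t then 1 else -1 := ⟨_, rfl⟩
  obtain ⟨t', ht'def⟩ : ∃ u : ℝ, u = |t| := ⟨_, rfl⟩
  have hσt : t = σ * t' := by
    rw [hσdef, ht'def]
    by_cases h : 0 ≤ t
    · rw [if_pos h, abs_of_nonneg h, one_mul]
    · push_neg at h
      rw [if_neg (not_le.2 h), abs_of_neg h]; ring
  have hσabs : |σ| = 1 := by
    rw [hσdef]; by_cases h : 0 ≤ t <;> simp [h]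
  have ht'0 : 0 ≤ t' := ht'def ▸ abs_nonneg t
  have ht'1 : t' ≤ 1 := ht'def ▸ abs_le.2 ht
  -- fact A
  have factA : ∀ u : ℝ, 0 ≤ u → t' + u ≤ 1 → z + (σ * u) • x ∈ frontier Qs := by
    intro u hu hu1
    have hyeq : z + (σ * u) • x = s • w + (σ * (t' + u)) • x := by
      rw [hzeq, hσt]; module
    have habs : |σ * (t' + u)| ≤ 1 := by
      rw [abs_mul, hσabs, one_mul, abs_of_nonneg (by linarith)]; linarith
    have hyQs : z + (σ * u) • x ∈ Qs := hyeq ▸ hQsmem w hw _ habs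
    constructor
    · exact subset_closure hyQs
    · rcases eq_or_lt_of_le hu with rfl | hu0
      · intro hint
        apply hzint
        have : z + (σ * 0) • x = z := by simp
        rwa [this] at hint
      · intro hint
        apply hzint
        set τ := t' + u with hτdef
        have hτpos : 0 < τ := by simp only [hτdef]; linarith
        set lam := (1 + t' / τ) / 2 with hlam
        have ht'τ : t' / τ < 1 := (div_lt_one hτpos).2 (by simp only [hτdef]; linarith)
        have hlam0 : 0 < lam := by
          have : 0 ≤ t' / τ := div_nonneg ht'0 hτpos.le
          rw [hlam]; linarith
        have hlam1 : lam < 1 := by rw [hlam]; linarith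
        have hhat : s • w + (-(σ * τ)) • x ∈ Qs := by
          apply hQsmem w hw
          rw [abs_neg, abs_mul, hσabs, one_mul, abs_of_pos hτpos]
          simp only [hτdef]; linarith
        have hcombo : z = lam • (z + (σ * u) • x) + (1 - lam) • (s • w + (-(σ * τ)) • x) := by
          rw [hyeq, hzeq, hσt]
          have hcoef : σ * t' = lam * (σ * τ) + (1 - lam) * (-(σ * τ)) := by
            have : lam * (σ * τ) + (1 - lam) * (-(σ * τ)) = (2 * lam - 1) * (σ * τ) := by ring
            rw [this, hlam]
            field_simp
            ring
          rw [hcoef]; module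
        rw [hcombo]
        exact hQsconv.combo_interior_closure_mem_interior hint
          (subset_closure hhat) hlam0 (by linarith) (by ring)
  -- fact B
  have factB : ∀ τ : ℝ, 1 ≤ τ →
      ∃ P, P ∈ frontier Qs ∩ (Px ∪ Pnx) ∧ z + (σ * (τ - t')) • x = τ • P ∧
        f (z + (σ * (τ - t')) • x) = τ ^ α * κ := by
    intro τ hτ
    have hτ0 : 0 < τ := by linarith
    obtain ⟨P, hPdef⟩ : ∃ P, P = s • (τ⁻¹ • w) + σ • x := ⟨_, rfl⟩
    have hwτ : τ⁻¹ • w ∈ Q := by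
      have := hQconv hw h0Q (by positivity : (0:ℝ) ≤ τ⁻¹)
        (by rw [sub_nonneg, inv_le_one_iff₀]; right; exact hτ)
        (by ring : τ⁻¹ + (1 - τ⁻¹) = 1)
      simpa using this
    have hPQs : P ∈ Qs := by
      rw [hPdef]; exact hQsmem _ hwτ σ (le_of_eq hσabs)
    have hPinner : ⟪P, x⟫ = σ * ‖x‖ ^ 2 := by
      rw [hPdef, inner_add_left, real_inner_smul_left, real_inner_smul_left,
        real_inner_smul_left, hQplane w hw, real_inner_self_eq_norm_sq]
      ring
    have hPfront : P ∈ frontier Qs := by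
      constructor
      · exact subset_closure hPQs
      · intro hint
        obtain ⟨ε, hε, hball⟩ := Metric.mem_nhds_iff.1 (mem_interior_iff_mem_nhds.1 hint)
        obtain ⟨δ, hδ⟩ : ∃ u : ℝ, u = ε / (2 * ‖x‖) := ⟨_, rfl⟩
        have hδpos : 0 < δ := by rw [hδ]; positivity
        have hmem : P + (σ * δ) • x ∈ Qs := by
          apply hball
          rw [mem_ball_iff_norm]
          have h1 : P + (σ * δ) • x - P = (σ * δ) • x := by abel
          have h2 : δ * ‖x‖ = ε / 2 := by
            rw [hδ]; field_simp
          rw [h1, norm_smul, Real.norm_eq_abs, abs_mul, hσabs, one_mul,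
            abs_of_pos hδpos, h2]
          linarith
        have hcd := hcoord _ hmem
        rw [inner_add_left, hPinner, real_inner_smul_left, real_inner_self_eq_norm_sq] at hcd
        have : σ * ‖x‖ ^ 2 + σ * δ * ‖x‖ ^ 2 = σ * ((1 + δ) * ‖x‖ ^ 2) := by ring
        have hpos : (0:ℝ) < (1 + δ) * ‖x‖ ^ 2 :=
          mul_pos (by linarith) (pow_pos hnx 2)
        rw [this, abs_mul, hσabs, one_mul, abs_of_pos hpos] at hcd
        nlinarith [mul_pos hδpos (pow_pos hnx 2)]
    have hPmem : P ∈ Px ∪ Pnx := by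
      by_cases h : 0 ≤ t
      · have hσ1 : σ = 1 := by rw [hσdef, if_pos h]
        left
        rw [hPx]
        simp only [Set.mem_setOf_eq]
        rw [hPdef, hσ1]
        have : s • (τ⁻¹ • w) + (1:ℝ) • x - x = s • (τ⁻¹ • w) := by module
        rw [this, real_inner_smul_left, real_inner_smul_left, hQplane w hw]
        ring
      · have hσ1 : σ = -1 := by rw [hσdef, if_neg h]
        right
        rw [hPnx]
        simp only [Set.mem_setOf_eq]
        rw [hPdef, hσ1]
        have : s • (τ⁻¹ • w) + (-1:ℝ) • x + x = s • (τ⁻¹ • w) := by module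
        rw [this, real_inner_smul_left, real_inner_smul_left, hQplane w hw]
        ring
    have heq : z + (σ * (τ - t')) • x = τ • P := by
      have h1 : τ • P = s • (τ • τ⁻¹ • w) + (τ * σ) • x := by
        rw [hPdef, smul_add, smul_comm τ s, smul_smul τ σ]
      rw [h1, smul_inv_smul₀ hτ0.ne', hzeq, hσt]
      module
    have hgP : gauge Qs (τ • P) = τ := by
      rw [gauge_smul_of_nonneg hτ0.le, hgfr P hPfront, smul_eq_mul, mul_one]
    have hne : z + (σ * (τ - t')) • x ≠ 0 := by
      rw [heq]
      intro h
      rw [h, gauge_zero] at hgP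
      linarith
    refine ⟨P, ⟨hPfront, hPmem⟩, heq, ?_⟩
    rw [hf _ hne, heq, hgP, inv_smul_smul₀ hτ0.ne',
      hfsflat P ⟨hPfront, hPmem⟩]
  -- choose c
  refine ⟨σ * (q - t'), ?_, ?_⟩
  · obtain ⟨P, hP, heq, -⟩ := factB q hq.le
    exact Set.mem_smul_set.2 ⟨P, hP.2, heq.symm⟩
  · -- the D bound
    have hc : (0:ℝ) < q - t' := by linarith
    have hμeq : μ ((z + (σ * (q - t')) • x) - z) = q - t' := by
      have h1 : (z + (σ * (q - t')) • x) - z = (σ * (q - t')) • x := by abel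
      rw [h1, hμ_smul, hx1, mul_one, abs_mul, hσabs, one_mul, abs_of_pos hc]
    have hptwise : ∀ t ∈ Set.Ioo (0:ℝ) 1,
        ENNReal.ofReal ((f (z + t • ((z + (σ * (q - t')) • x) - z)))⁻¹)
          ≤ ENNReal.ofReal (if t * (q - t') ≤ 1 - t' then κlow⁻¹
              else κ⁻¹ * (t' + (q - t') * t) ^ (-α)) := by
      intro t htIoo
      have harg : z + t • ((z + (σ * (q - t')) • x) - z)
          = z + (σ * (t * (q - t'))) • x := by
        have h1 : (z + (σ * (q - t')) • x) - z = (σ * (q - t')) • x := by abel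
        rw [h1, smul_smul, mul_left_comm]
      by_cases hcase : t * (q - t') ≤ 1 - t'
      · rw [if_pos hcase, harg]
        apply ENNReal.ofReal_le_ofReal
        have hyfr : z + (σ * (t * (q - t'))) • x ∈ frontier Qs :=
          factA _ (mul_nonneg htIoo.1.le hc.le) (by linarith)
        rw [hffront _ hyfr]
        exact inv_anti₀ hκlowpos (hκlow.1 ⟨_, hyfr, rfl⟩)
      · rw [if_neg hcase, harg]
        push_neg at hcase
        have hτ1 : 1 ≤ t' + t * (q - t') := by linarith
        obtain ⟨P, hP, heqP, hfval⟩ := factB (t' + t * (q - t')) hτ1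
        have hsimp : (t' + t * (q - t')) - t' = t * (q - t') := by ring
        rw [hsimp] at hfval
        rw [hfval]
        apply le_of_eq
        have hτeq : t' + (q - t') * t = t' + t * (q - t') := by ring
        rw [hτeq, Real.rpow_neg (by linarith : (0:ℝ) ≤ t' + t * (q - t')), mul_inv, mul_comm]
    have hrpow_meas : Measurable (fun v : ℝ => v ^ (-α)) :=
      measurable_of_continuousOn_compl_singleton 0 (fun v hv =>
        (Real.continuousAt_rpow_const v (-α) (Or.inl hv)).continuousWithinAt)
    calc Dmet μ f z (z + (σ * (q - t')) • x)
        ≤ segLen μ f z (z + (σ * (q - t')) • x) := stmt13_dmet_le μ f z _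
      _ = ENNReal.ofReal (q - t') * ∫⁻ t in Set.Ioo (0:ℝ) 1,
            ENNReal.ofReal ((f (z + t • ((z + (σ * (q - t')) • x) - z)))⁻¹) := by
          rw [segLen, hμeq]
      _ ≤ ENNReal.ofReal (q - t') * ∫⁻ t in Set.Ioo (0:ℝ) 1,
            ENNReal.ofReal (if t * (q - t') ≤ 1 - t' then κlow⁻¹
              else κ⁻¹ * (t' + (q - t') * t) ^ (-α)) := by
          exact mul_le_mul_of_nonneg_left (setLIntegral_mono' measurableSet_Ioo hptwise) (zero_le)
      _ ≤ ENNReal.ofReal ((1 - q ^ (1 - α)) / (κ * (α - 1)) + 1 / κlow) :=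
          stmt13_intlem t' q α κ κlow ht'0 ht'1 hq hα hκlowpos hκge
end
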